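/- arXiv:1311.3948 — 7 statements merged into one kernel-verified Lean document; each statement's English description precedes it below -/
import Mathlib

section
/- Let Q be a word of length m in the simple reflections of a finite Coxeter system (W,S), let Q' be obtained from Q by doubling the letter at position p (so the doubled positions of Q' are p and p+1), and let ρ ∈ W. Then for every face F of the subword complex Δ(Q',ρ), at least one of F ∪ {p} and F ∪ {p+1} is again a face of Δ(Q',ρ). Equivalently, Δ(Q',ρ) = (Lk_{Δ(Q',ρ)}({p}) ∗ {p+1}) ∪ (Lk_{Δ(Q',ρ)}({p+1}) ∗ {p}), where the join of a complex with a single vertex v consists of all faces σ and σ ∪ {v} for σ in the complex. -/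
namespace SubwordComplexNil

variable {B W : Type*} [Group W] {M : CoxeterMatrix B}

/-- The set of positions `P` in the word `Q : Fin m → B` contains an embedded reduced
expression of `ρ`. -/
def ContainsReduced (cs : CoxeterSystem M W) {m : ℕ} (Q : Fin m → B)
    (P : Finset (Fin m)) (ρ : W) : Prop :=
  ∃ I : Finset (Fin m), I ⊆ P ∧ I.card = cs.length ρ ∧
    cs.wordProd ((I.sort (· ≤ ·)).map Q) = ρ

/-- `F` is a face of the subword complex `Δ(Q, ρ)`. -/
def IsFace (cs : CoxeterSystem M W) {m : ℕ} (Q : Fin m → B) (ρ : W)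
    (F : Finset (Fin m)) : Prop :=
  ContainsReduced cs Q Fᶜ ρ

/-- The word obtained from `Q` by doubling the letter at position `p`.  The doubled
positions of the new word are `p.castSucc` and `p.succ`. -/
def doubleAt {m : ℕ} (Q : Fin m → B) (p : Fin m) (i : Fin (m + 1)) : B :=
  if h : (i : ℕ) ≤ (p : ℕ) then Q ⟨i, lt_of_le_of_lt h p.isLt⟩
  else Q ⟨(i : ℕ) - 1, by have := i.isLt; omega⟩

/-- In a strictly sorted list, two elements with nothing strictly between them
are adjacent. -/
lemma sorted_adjacent {α : Type*} [LinearOrder α] :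
    ∀ {L : List α}, L.Pairwise (· < ·) → ∀ {a b : α}, a ∈ L → b ∈ L → a < b →
    (∀ c ∈ L, ¬(a < c ∧ c < b)) → ∃ L1 L2, L = L1 ++ a :: b :: L2 := by
  intro L
  induction L with
  | nil => intro _ a b ha; exact absurd ha (by simp)
  | cons x rest ih =>
    intro hL a b ha hb hab hmid
    rw [List.pairwise_cons] at hL
    obtain ⟨hx, hrest⟩ := hL
    by_cases hxa : x = a
    · subst hxa
      have hb' : b ∈ rest := by
        rcases List.mem_cons.mp hb with h | h
        · exact absurd h.symm (ne_of_lt hab)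
        · exact h
      cases rest with
      | nil => exact absurd hb' (by simp)
      | cons y rest' =>
        have hxy : x < y := hx y (by simp)
        have hyb : ¬(x < y ∧ y < b) := hmid y (by simp)
        have hby : b ≤ y := by
          by_contra h
          exact hyb ⟨hxy, lt_of_not_ge h⟩
        have hyb' : y = b := by
          rcases List.mem_cons.mp hb' with h | h
          · exact h.symm
          · exact absurd ((List.pairwise_cons.mp hrest).1 b h) (not_lt.mpr hby)
        exact ⟨[], rest', by rw [hyb']; rfl⟩
    · have ha' : a ∈ rest := by
        rcases List.mem_cons.mp ha with h | h
        · exact absurd h.symm hxa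
        · exact h
      have hb' : b ∈ rest := by
        rcases List.mem_cons.mp hb with h | h
        · exact absurd (h ▸ hab) (not_lt.mpr (le_of_lt (hx a ha')))
        · exact h
      obtain ⟨L1, L2, hL12⟩ := ih hrest ha' hb' hab
        (fun c hc => hmid c (List.mem_cons_of_mem _ hc))
      exact ⟨x :: L1, L2, by rw [hL12]; rfl⟩

/-- For every face `F` of the subword complex of the doubled word, at least one of
`F ∪ {p}` and `F ∪ {p+1}` (where `p`, `p+1` are the doubled positions) is again a
face; i.e. `Δ(Q',ρ)` is the union of the joins of the links of the two doubled
vertices with the respectively opposite doubled vertex. -/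
theorem face_extends_to_doubled_position [Finite W] (cs : CoxeterSystem M W)
    {m : ℕ} (Q : Fin m → B) (p : Fin m) (ρ : W) (F : Finset (Fin (m + 1)))
    (hF : IsFace cs (doubleAt Q p) ρ F) :
    IsFace cs (doubleAt Q p) ρ (insert p.castSucc F) ∨
      IsFace cs (doubleAt Q p) ρ (insert p.succ F) := by
  obtain ⟨I, hIsub, hcard, hprod⟩ := hF
  by_cases h1 : p.castSucc ∈ I
  · by_cases h2 : p.succ ∈ I
    · exfalso
      set Q' := doubleAt Q p with hQ'
      -- the two doubled positions are adjacent in the sorted list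
      have hmid : ∀ c ∈ I.sort (· ≤ ·), ¬(p.castSucc < c ∧ c < p.succ) := by
        intro c _ ⟨hc1, hc2⟩
        rw [Fin.lt_def] at hc1 hc2
        simp only [Fin.coe_castSucc, Fin.val_succ] at hc1 hc2
        omega
      obtain ⟨L1, L2, hsplit⟩ := sorted_adjacent (List.sortedLT_iff_pairwise.mp I.sortedLT_sort)
        ((Finset.mem_sort _).mpr h1) ((Finset.mem_sort _).mpr h2)
        (Fin.castSucc_lt_succ (i := p)) hmid
      have e1 : Q' p.castSucc = Q p := by
        simp [hQ', doubleAt]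
      have e2 : Q' p.succ = Q p := by
        have hne : ¬((p.succ : ℕ) ≤ (p : ℕ)) := by simp
        simp only [hQ', doubleAt, dif_neg hne]
        congr 1
      have hρ : ρ = cs.wordProd ((L1 ++ L2).map Q') := by
        rw [← hprod, hsplit]
        simp only [List.map_append, List.map_cons, cs.wordProd_append, cs.wordProd_cons,
          e1, e2]
        rw [← mul_assoc (cs.simple (Q p)), cs.simple_mul_simple_self, one_mul]
      have hlen : cs.length ρ ≤ L1.length + L2.length := by
        rw [hρ]
        calc cs.length (cs.wordProd ((L1 ++ L2).map Q'))
            ≤ ((L1 ++ L2).map Q').length := cs.length_wordProd_le _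
          _ = L1.length + L2.length := by simp
      have hlsort : (I.sort (· ≤ ·)).length = I.card := Finset.length_sort _
      rw [hsplit] at hlsort
      simp only [List.length_append, List.length_cons] at hlsort
      omega
    · right
      refine ⟨I, fun x hx => ?_, hcard, hprod⟩
      simp only [Finset.mem_compl, Finset.mem_insert, not_or]
      exact ⟨fun h => h2 (h ▸ hx), Finset.mem_compl.mp (hIsub hx)⟩
  · left
    refine ⟨I, fun x hx => ?_, hcard, hprod⟩
    simp only [Finset.mem_compl, Finset.mem_insert, not_or]
    exact ⟨fun h => h1 (h ▸ hx), Finset.mem_compl.mp (hIsub hx)⟩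

end SubwordComplexNil
end

section
/- Let Q be a word of length m in the simple reflections of a finite Coxeter system (W,S), let Q' be obtained from Q by doubling the letter at position p (doubled positions p and p+1 of Q'), and let ρ ∈ W. Define φ' : {1,…,m} → {1,…,m+1} by φ'(i) = i for i < p, φ'(p) = p+1, φ'(i) = i+1 for i > p, and φ : {1,…,m} → {1,…,m+1} by φ(i) = i for i ≤ p, φ(i) = i+1 for i > p. Then for every G ⊆ {1,…,m}: G is a face of Δ(Q,ρ) if and only if φ'(G) ∪ {p} is a face of Δ(Q',ρ), and G is a face of Δ(Q,ρ) if and only if φ(G) ∪ {p+1} is a face of Δ(Q',ρ). That is, Δ(Q,ρ) is isomorphic both to Lk_{Δ(Q',ρ)}({p}) and to Lk_{Δ(Q',ρ)}({p+1}). -/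
namespace SubwordComplexNil

variable {B W : Type*} [Group W] {M : CoxeterMatrix B}

lemma sort_image {α β : Type*} [LinearOrder α] [LinearOrder β] [DecidableEq β] {f : α → β}
    (hf : StrictMono f) (s : Finset α) :
    (s.image f).sort (· ≤ ·) = (s.sort (· ≤ ·)).map f := by
  have hperm : List.Perm ((s.image f).sort (· ≤ ·)) ((s.sort (· ≤ ·)).map f) := by
    rw [← Multiset.coe_eq_coe, ← Multiset.map_coe, Finset.sort_eq, Finset.sort_eq,
      Finset.image_val_of_injOn (hf.injective.injOn)]
  have h1 : List.Pairwise (· < ·) ((s.image f).sort (· ≤ ·)) := (Finset.sortedLT_sort _).pairwise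
  have h2 : List.Pairwise (· < ·) ((s.sort (· ≤ ·)).map f) :=
    List.pairwise_map.mpr ((Finset.sortedLT_sort s).pairwise.imp fun h => hf h)
  exact hperm.eq_of_pairwise (fun a b _ _ h h' => absurd h' (asymm h)) h1 h2

lemma compl_insert_image {m : ℕ} (c : Fin (m + 1)) (G : Finset (Fin m)) :
    (insert c (G.image c.succAbove))ᶜ = Gᶜ.image c.succAbove := by
  ext j
  simp only [Finset.mem_compl, Finset.mem_insert, Finset.mem_image, not_or]
  constructor
  · rintro ⟨hjc, hj⟩
    obtain ⟨i, rfl⟩ := Fin.exists_succAbove_eq hjc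
    exact ⟨i, fun hi => hj ⟨i, hi, rfl⟩, rfl⟩
  · rintro ⟨i, hi, rfl⟩
    refine ⟨c.succAbove_ne i, ?_⟩
    rintro ⟨i', hi', he⟩
    exact hi ((c.succAbove_right_injective he) ▸ hi')

lemma containsReduced_image (cs : CoxeterSystem M W) {m : ℕ} (Q : Fin m → B)
    (Q' : Fin (m + 1) → B) (c : Fin (m + 1)) (hQ : ∀ i, Q' (c.succAbove i) = Q i)
    (P : Finset (Fin m)) (ρ : W) :
    ContainsReduced cs Q P ρ ↔ ContainsReduced cs Q' (P.image c.succAbove) ρ := by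
  have hsm : StrictMono c.succAbove := Fin.strictMono_succAbove c
  constructor
  · rintro ⟨I, hIP, hcard, hprod⟩
    refine ⟨I.image c.succAbove, Finset.image_subset_image hIP,
      (Finset.card_image_of_injective _ hsm.injective).trans hcard, ?_⟩
    simp only [sort_image hsm, List.map_map]
    rwa [show Q' ∘ c.succAbove = Q from funext hQ]
  · rintro ⟨J, hJP, hcard, hprod⟩
    obtain ⟨I, hIP, rfl⟩ := Finset.subset_image_iff.mp hJP
    refine ⟨I, hIP, (Finset.card_image_of_injective _ hsm.injective).symm.trans hcard, ?_⟩
    simp only [sort_image hsm, List.map_map] at hprod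
    rwa [show Q' ∘ c.succAbove = Q from funext hQ] at hprod

/-- `Δ(Q, ρ)` is isomorphic both to the link of the first doubled vertex and to the
link of the second doubled vertex in `Δ(Q', ρ)`: here `φ' = (p.castSucc).succAbove`
(the order embedding of the old positions omitting the first doubled position) and
`φ = (p.succ).succAbove` (the one omitting the second doubled position). -/
theorem link_of_doubled_positions [Finite W] (cs : CoxeterSystem M W)
    {m : ℕ} (Q : Fin m → B) (p : Fin m) (ρ : W) (G : Finset (Fin m)) :
    (IsFace cs Q ρ G ↔
      IsFace cs (doubleAt Q p) ρ (insert p.castSucc (G.image p.castSucc.succAbove))) ∧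
    (IsFace cs Q ρ G ↔
      IsFace cs (doubleAt Q p) ρ (insert p.succ (G.image p.succ.succAbove))) := by
  have h1 : ∀ i, doubleAt Q p (p.castSucc.succAbove i) = Q i := by
    intro i
    rcases lt_or_ge (i : ℕ) (p : ℕ) with h | h
    · rw [Fin.succAbove_of_castSucc_lt _ _ (by rw [Fin.lt_def]; simp only [Fin.val_succ, Fin.coe_castSucc]; omega)]
      simp only [doubleAt, Fin.coe_castSucc]
      rw [dif_pos (le_of_lt h)]
    · rw [Fin.succAbove_of_le_castSucc _ _ (by rw [Fin.le_def]; simp only [Fin.val_succ, Fin.coe_castSucc]; omega)]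
      simp only [doubleAt, Fin.val_succ]
      rw [dif_neg (by omega)]
      exact congrArg Q (Fin.ext (by simp))
  have h2 : ∀ i, doubleAt Q p (p.succ.succAbove i) = Q i := by
    intro i
    rcases lt_or_ge (p : ℕ) (i : ℕ) with h | h
    · rw [Fin.succAbove_of_le_castSucc _ _ (by rw [Fin.le_def]; simp only [Fin.val_succ, Fin.coe_castSucc]; omega)]
      simp only [doubleAt, Fin.val_succ]
      rw [dif_neg (by omega)]
      exact congrArg Q (Fin.ext (by simp))
    · rw [Fin.succAbove_of_castSucc_lt _ _ (by rw [Fin.lt_def]; simp only [Fin.val_succ, Fin.coe_castSucc]; omega)]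
      simp only [doubleAt, Fin.coe_castSucc]
      rw [dif_pos h]
  constructor
  · unfold IsFace
    rw [compl_insert_image]
    exact containsReduced_image cs Q _ _ h1 Gᶜ ρ
  · unfold IsFace
    rw [compl_insert_image]
    exact containsReduced_image cs Q _ _ h2 Gᶜ ρ

end SubwordComplexNil
end

section
/- Let Q be a word of length m in the simple reflections of a finite Coxeter system (W,S), let Q' be obtained from Q by doubling the letter at position p (doubled positions p and p+1 of Q'), and let ρ ∈ W. Let ψ : {1,…,m} \ {p} → {1,…,m+1} \ {p,p+1} be the order-preserving bijection (ψ(i) = i for i < p, ψ(i) = i+1 for i > p). Then for every F ⊆ {1,…,m+1}, writing σ = ψ^{-1}(F \ {p,p+1}) ⊆ {1,…,m} \ {p}: (i) if F contains at most one of p, p+1, then F is a face of Δ(Q',ρ) if and only if σ is a face of Δ(Q,ρ); (ii) if F contains both p and p+1, then F is a face of Δ(Q',ρ) if and only if σ ∪ {p} is a face of Δ(Q,ρ). -/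
namespace SubwordComplexNil

variable {B W : Type*} [Group W] {M : CoxeterMatrix B}

lemma coe_succAbove_castSucc {m : ℕ} (p i : Fin m) :
    ((p.castSucc.succAbove i : Fin (m+1)) : ℕ) = if (i:ℕ) < p then (i:ℕ) else (i:ℕ) + 1 := by
  rcases Nat.lt_or_ge (i:ℕ) (p:ℕ) with h | h
  · rw [Fin.succAbove_of_castSucc_lt _ _ (by rwa [Fin.castSucc_lt_castSucc_iff, Fin.lt_def]),
      if_pos h, Fin.coe_castSucc]
  · rw [Fin.succAbove_of_le_castSucc _ _ (by rwa [Fin.castSucc_le_castSucc_iff, Fin.le_def]),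
      if_neg (by omega), Fin.val_succ]

lemma coe_predAbove {m : ℕ} (p : Fin m) (i : Fin (m+1)) :
    ((p.predAbove i : Fin m) : ℕ) = if (p:ℕ) < i then (i:ℕ) - 1 else (i:ℕ) := by
  rcases Nat.lt_or_ge (p:ℕ) (i:ℕ) with h | h
  · rw [Fin.predAbove_of_castSucc_lt _ _ (by simpa [Fin.lt_def] using h), if_pos h, Fin.coe_pred]
  · rw [Fin.predAbove_of_le_castSucc _ _ (by simpa [Fin.le_def] using h), if_neg (by omega),
      Fin.coe_castPred]

/-- Sorting commutes with taking the image under a map strictly monotone on the set. -/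
lemma sort_image_s5 {n n' : ℕ} {g : Fin n → Fin n'} {I : Finset (Fin n)}
    (hg : StrictMonoOn g ↑I) :
    ((I.image g).sort (· ≤ ·)) = (I.sort (· ≤ ·)).map g := by
  have hmemI : ∀ x, x ∈ I.sort (· ≤ ·) ↔ x ∈ I := fun x => Finset.mem_sort _
  have hnd : ((I.sort (· ≤ ·)).map g).Nodup := by
    refine (Finset.sort_nodup I _).map_on ?_
    intro x hx y hy hxy
    exact hg.injOn ((hmemI x).1 hx) ((hmemI y).1 hy) hxy
  have hst : ((I.sort (· ≤ ·)).map g).Pairwise (· ≤ ·) := by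
    rw [List.pairwise_map]
    have h1 : (I.sort (· ≤ ·)).Pairwise (· < ·) := (Finset.sortedLT_sort I).pairwise
    rw [List.Pairwise.and_mem] at h1
    refine h1.imp ?_
    rintro a b ⟨ha, hb, hab⟩
    exact (hg ((hmemI a).1 ha) ((hmemI b).1 hb) hab).le
  refine List.Perm.eq_of_pairwise' (Finset.pairwise_sort _ _) hst ?_
  refine List.perm_of_nodup_nodup_toFinset_eq (Finset.sort_nodup _ _) hnd ?_
  rw [Finset.sort_toFinset]
  ext x
  simp only [List.mem_toFinset, List.mem_map, Finset.mem_image]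
  constructor
  · rintro ⟨a, ha, rfl⟩; exact ⟨a, (hmemI a).2 ha, rfl⟩
  · rintro ⟨a, ha, rfl⟩; exact ⟨a, (hmemI a).1 ha, rfl⟩

lemma containsReduced_mono (cs : CoxeterSystem M W) {m : ℕ} (Q : Fin m → B)
    {P P' : Finset (Fin m)} (h : P ⊆ P') {ρ : W}
    (hP : ContainsReduced cs Q P ρ) : ContainsReduced cs Q P' ρ := by
  obtain ⟨I, hI, hc, hw⟩ := hP
  exact ⟨I, hI.trans h, hc, hw⟩

lemma containsReduced_transport (cs : CoxeterSystem M W) {n n' : ℕ}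
    (Q : Fin n → B) (Q' : Fin n' → B) (g : Fin n → Fin n') (P : Finset (Fin n))
    (hg : StrictMonoOn g ↑P) (hQ : ∀ i ∈ P, Q' (g i) = Q i) {ρ : W}
    (hP : ContainsReduced cs Q P ρ) : ContainsReduced cs Q' (P.image g) ρ := by
  obtain ⟨I, hI, hc, hw⟩ := hP
  refine ⟨I.image g, Finset.image_subset_image hI, ?_, ?_⟩
  · rw [Finset.card_image_of_injOn (hg.injOn.mono (by exact_mod_cast hI))]; exact hc
  · rw [sort_image_s5 (hg.mono (by exact_mod_cast hI)), List.map_map]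
    rw [show (Q' ∘ g) = fun i => Q' (g i) from rfl] at *
    rw [List.map_congr_left (fun i hi => hQ i (hI ((Finset.mem_sort _).1 hi)))]
    exact hw

/-- A reduced subword cannot use both doubled positions. -/
lemma not_both_doubled (cs : CoxeterSystem M W) {m : ℕ} (Q' : Fin (m+1) → B) (p : Fin m)
    (hQ : Q' p.castSucc = Q' p.succ) {I : Finset (Fin (m+1))} {ρ : W}
    (hc : I.card = cs.length ρ) (hw : cs.wordProd ((I.sort (· ≤ ·)).map Q') = ρ)
    (h1 : p.castSucc ∈ I) (h2 : p.succ ∈ I) : False := by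
  obtain ⟨L, hL⟩ : ∃ L, I.sort (· ≤ ·) = L := ⟨_, rfl⟩
  rw [hL] at hw
  have hsl : L.Pairwise (· < ·) := hL ▸ (Finset.sortedLT_sort I).pairwise
  have hlen : L.length = I.card := hL ▸ Finset.length_sort _
  have h1' : p.castSucc ∈ L := by rw [← hL, Finset.mem_sort]; exact h1
  have h2' : p.succ ∈ L := by rw [← hL, Finset.mem_sort]; exact h2
  obtain ⟨i, hi⟩ := List.get_of_mem h1'
  obtain ⟨j, hj⟩ := List.get_of_mem h2'
  have hgs : StrictMono L.get := hsl.sortedLT.strictMono_get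
  have hij : (i : ℕ) < (j : ℕ) := by
    have hlt : L.get i < L.get j := by rw [hi, hj]; exact Fin.castSucc_lt_succ (i := p)
    exact hgs.lt_iff_lt.mp hlt
  have hj1 : (j : ℕ) = (i : ℕ) + 1 := by
    by_contra hcon
    have hk : (i:ℕ) + 1 < L.length := by omega
    have h1'' := hgs (show i < ⟨(i:ℕ)+1, hk⟩ by rw [Fin.lt_def]; exact Nat.lt_succ_self _)
    have h2'' := hgs (show (⟨(i:ℕ)+1, hk⟩ : Fin L.length) < j by rw [Fin.lt_def]; simp only [Fin.val_mk]; omega)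
    rw [hi] at h1''; rw [hj] at h2''
    rw [Fin.lt_def] at h1'' h2''
    simp only [Fin.coe_castSucc, Fin.val_succ] at h1'' h2''
    omega
  have hi2 : (i:ℕ) + 2 ≤ L.length := by omega
  have hdecomp : L = L.take (i:ℕ) ++ p.castSucc :: p.succ :: L.drop ((i:ℕ)+2) := by
    have d2 : L.drop ((i:ℕ)+1) = p.succ :: L.drop ((i:ℕ)+2) := by
      rw [List.drop_eq_getElem_cons (show (i:ℕ)+1 < L.length by omega)]
      congr 1
      obtain ⟨jv, hjv⟩ := j
      simp only [Fin.val_mk] at hj1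
      subst hj1
      simp only [List.get_eq_getElem] at hj
      exact hj
    have d1 : L.drop (i:ℕ) = p.castSucc :: p.succ :: L.drop ((i:ℕ)+2) := by
      rw [List.drop_eq_getElem_cons i.isLt, d2]
      simp only [List.get_eq_getElem] at hi
      rw [hi]
    rw [← d1, List.take_append_drop]
  have e1 : cs.wordProd (L.map Q') =
      cs.wordProd ((L.take (i:ℕ)).map Q') * cs.wordProd ((L.drop ((i:ℕ)+2)).map Q') := by
    conv_lhs => rw [hdecomp]
    rw [List.map_append, List.map_cons, List.map_cons, cs.wordProd_append, cs.wordProd_cons,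
      cs.wordProd_cons, hQ, ← mul_assoc (cs.simple (Q' p.succ)), cs.simple_mul_simple_self,
      one_mul]
  have hρ : ρ = cs.wordProd ((L.take (i:ℕ) ++ L.drop ((i:ℕ)+2)).map Q') := by
    rw [← hw, e1, List.map_append, cs.wordProd_append]
  have hle := cs.length_wordProd_le ((L.take (i:ℕ) ++ L.drop ((i:ℕ)+2)).map Q')
  rw [← hρ] at hle
  have hlen2 : ((L.take (i:ℕ) ++ L.drop ((i:ℕ)+2)).map Q').length = L.length - 2 := by
    rw [List.length_map, List.length_append, List.length_take, List.length_drop]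
    omega
  rw [hlen2] at hle
  omega

/-- Complete description of the faces of `Δ(Q', ρ)` for the doubled word `Q'`.  The
order-preserving bijection `ψ` from the old positions other than `p` onto the new
positions other than the two doubled ones is realized by `(p.castSucc).succAbove`, and
`σ = ψ⁻¹(F \ {p, p+1})`.  (i) If `F` contains at most one of the doubled positions,
then `F` is a face of `Δ(Q', ρ)` iff `σ` is a face of `Δ(Q, ρ)`.  (ii) If `F` contains
both, then `F` is a face of `Δ(Q', ρ)` iff `σ ∪ {p}` is a face of `Δ(Q, ρ)`. -/
theorem faces_of_doubled_word [Finite W] (cs : CoxeterSystem M W)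
    {m : ℕ} (Q : Fin m → B) (p : Fin m) (ρ : W) (F : Finset (Fin (m + 1))) :
    (¬(p.castSucc ∈ F ∧ p.succ ∈ F) →
      (IsFace cs (doubleAt Q p) ρ F ↔
        IsFace cs Q ρ ((F \ {p.castSucc, p.succ}).preimage p.castSucc.succAbove
          (Fin.succAbove_right_injective.injOn)))) ∧
    ((p.castSucc ∈ F ∧ p.succ ∈ F) →
      (IsFace cs (doubleAt Q p) ρ F ↔
        IsFace cs Q ρ (insert p ((F \ {p.castSucc, p.succ}).preimage
          p.castSucc.succAbove (Fin.succAbove_right_injective.injOn))))) := by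
  classical
  set ψ : Fin m → Fin (m+1) := p.castSucc.succAbove with hψdef
  set Q' : Fin (m+1) → B := doubleAt Q p with hQ'def
  set σ : Finset (Fin m) :=
    (F \ {p.castSucc, p.succ}).preimage ψ (Fin.succAbove_right_injective.injOn) with hσdef
  have hψv : ∀ i : Fin m, ((ψ i) : ℕ) = if (i:ℕ) < p then (i:ℕ) else (i:ℕ)+1 :=
    fun i => coe_succAbove_castSucc p i
  have hφv : ∀ i : Fin (m+1), ((p.predAbove i : Fin m) : ℕ) = if (p:ℕ) < i then (i:ℕ)-1 else (i:ℕ) :=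
    fun i => coe_predAbove p i
  have hψp : ψ p = p.succ := Fin.succAbove_castSucc_self p
  have hψmono : StrictMono ψ := Fin.strictMono_succAbove p.castSucc
  have hQψ : ∀ i : Fin m, Q' (ψ i) = Q i := by
    intro i
    have hv := hψv i
    show doubleAt Q p (ψ i) = Q i
    unfold doubleAt
    split_ifs with h
    · exact congrArg Q (Fin.ext (by simp only [Fin.val_mk]; split_ifs at hv <;> omega))
    · exact congrArg Q (Fin.ext (by simp only [Fin.val_mk]; split_ifs at hv <;> omega))
  have hQφ : ∀ i : Fin (m+1), Q (p.predAbove i) = Q' i := by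
    intro i
    have hv := hφv i
    show Q (p.predAbove i) = doubleAt Q p i
    unfold doubleAt
    split_ifs with h
    · exact congrArg Q (Fin.ext (by simp only [Fin.val_mk]; split_ifs at hv <;> omega))
    · exact congrArg Q (Fin.ext (by simp only [Fin.val_mk]; split_ifs at hv <;> omega))
  have hQpc : Q' p.castSucc = Q p := by
    rw [← hQφ p.castSucc]
    exact congrArg Q (Fin.ext (by rw [hφv]; simp))
  have hQps : Q' p.succ = Q p := by
    rw [← hQφ p.succ]
    exact congrArg Q (Fin.ext (by rw [hφv]; simp))
  have hψne : ∀ i : Fin m, ψ i ≠ p.castSucc := fun i => Fin.succAbove_ne p.castSucc i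
  have hψeq : ∀ i : Fin m, ψ i = p.succ ↔ i = p := by
    intro i
    constructor
    · intro h
      exact Fin.succAbove_right_injective (p := p.castSucc) (show ψ i = ψ p by rw [h, hψp])
    · rintro rfl; exact hψp
  have hmemσ : ∀ i : Fin m, i ∈ σ ↔ (ψ i ∈ F ∧ i ≠ p) := by
    intro i
    rw [hσdef, Finset.mem_preimage, Finset.mem_sdiff, Finset.mem_insert, Finset.mem_singleton]
    constructor
    · rintro ⟨hF, hne⟩
      push_neg at hne
      exact ⟨hF, fun h => hne.2 ((hψeq i).2 h)⟩
    · rintro ⟨hF, hne⟩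
      exact ⟨hF, by push_neg; exact ⟨hψne i, fun h => hne ((hψeq i).1 h)⟩⟩
  have hmemσc : ∀ i : Fin m, i ∈ σᶜ ↔ (ψ i ∉ F ∨ i = p) := by
    intro i
    rw [Finset.mem_compl, hmemσ]
    by_cases h : i = p <;> simp [h]
  have hφmono : ∀ (S : Finset (Fin (m+1))), ¬(p.castSucc ∈ S ∧ p.succ ∈ S) →
      StrictMonoOn p.predAbove ↑S := by
    intro S hS x hx y hy hxy
    rw [Finset.mem_coe] at hx hy
    rw [Fin.lt_def] at hxy ⊢
    rw [hφv, hφv]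
    have hxy' : ¬((x:ℕ) = p ∧ (y:ℕ) = (p:ℕ) + 1) := by
      rintro ⟨h1, h2⟩
      refine hS ⟨?_, ?_⟩
      · rwa [show p.castSucc = x from Fin.ext (by simp [h1])]
      · rwa [show p.succ = y from Fin.ext (by simp [h2])]
    split_ifs <;> omega
  -- the two doubled positions cannot both appear in a reduced subword
  have hnotboth : ∀ (I : Finset (Fin (m+1))), I.card = cs.length ρ →
      cs.wordProd ((I.sort (· ≤ ·)).map Q') = ρ → ¬(p.castSucc ∈ I ∧ p.succ ∈ I) := by
    rintro I hc hw ⟨ha, hb⟩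
    exact not_both_doubled cs Q' p (hQpc.trans hQps.symm) hc hw ha hb
  constructor
  · intro hone
    constructor
    · rintro ⟨I, hIF, hc, hw⟩
      have hI2 : ¬(p.castSucc ∈ I ∧ p.succ ∈ I) := hnotboth I hc hw
      have ht := containsReduced_transport cs Q' Q p.predAbove I (hφmono I hI2)
        (fun i _ => hQφ i) ⟨I, subset_rfl, hc, hw⟩
      refine containsReduced_mono cs Q ?_ ht
      intro j hj
      obtain ⟨i, hiI, rfl⟩ := Finset.mem_image.1 hj
      rw [hmemσc]
      by_cases hip : (i:ℕ) = (p:ℕ) ∨ (i:ℕ) = (p:ℕ) + 1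
      · right
        refine Fin.ext ?_
        rw [hφv]
        split_ifs <;> omega
      · left
        have heq : ψ (p.predAbove i) = i := by
          refine Fin.ext ?_
          rw [hψv, hφv]
          push_neg at hip
          split_ifs <;> omega
        rw [heq]
        exact Finset.mem_compl.1 (hIF hiI)
    · intro hface
      by_cases hps : p.succ ∈ F
      · have hpc : p.castSucc ∉ F := fun h => hone ⟨h, hps⟩
        set g : Fin m → Fin (m+1) := fun i => if i = p then p.castSucc else ψ i with hgdef
        have hgv : ∀ i : Fin m, ((g i):ℕ) = if (i:ℕ) ≤ p then (i:ℕ) else (i:ℕ)+1 := by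
          intro i
          by_cases h : i = p
          · subst h; simp [hgdef]
          · have h' : (i:ℕ) ≠ (p:ℕ) := fun hh => h (Fin.ext hh)
            rw [hgdef]
            simp only [if_neg h]
            rw [hψv]
            split_ifs <;> omega
        have hgmono : StrictMono g := by
          intro x y hxy
          rw [Fin.lt_def] at hxy ⊢
          rw [hgv, hgv]
          split_ifs <;> omega
        have hgQ : ∀ i : Fin m, Q' (g i) = Q i := by
          intro i
          by_cases h : i = p
          · subst h; rw [hgdef]; simpa using hQpc
          · rw [hgdef]; simp only [if_neg h]; exact hQψ i
        have ht := containsReduced_transport cs Q Q' g σᶜ (hgmono.strictMonoOn _)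
          (fun i _ => hgQ i) hface
        refine containsReduced_mono cs Q' ?_ ht
        intro j hj
        obtain ⟨i, hi, rfl⟩ := Finset.mem_image.1 hj
        rw [Finset.mem_compl]
        rcases (hmemσc i).1 hi with h | h
        · by_cases h' : i = p
          · subst h'; rw [hgdef]; simpa using hpc
          · rw [hgdef]; simpa [if_neg h'] using h
        · subst h; rw [hgdef]; simpa using hpc
      · have ht := containsReduced_transport cs Q Q' ψ σᶜ (hψmono.strictMonoOn _)
          (fun i _ => hQψ i) hface
        refine containsReduced_mono cs Q' ?_ ht
        intro j hj
        obtain ⟨i, hi, rfl⟩ := Finset.mem_image.1 hj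
        rw [Finset.mem_compl]
        rcases (hmemσc i).1 hi with h | h
        · exact h
        · subst h; rwa [hψp]
  · intro hboth
    have hmemTc : ∀ i : Fin m, i ∈ (insert p σ)ᶜ ↔ ψ i ∉ F := by
      intro i
      rw [Finset.mem_compl, Finset.mem_insert]
      constructor
      · intro h
        push_neg at h
        rcases (hmemσc i).1 (Finset.mem_compl.2 h.2) with h' | h'
        · exact h'
        · exact absurd h' h.1
      · intro h
        have hip : i ≠ p := fun hh => h (by rw [hh, hψp]; exact hboth.2)
        push_neg
        exact ⟨hip, fun hmem => h ((hmemσ i).1 hmem).1⟩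
    constructor
    · rintro ⟨I, hIF, hc, hw⟩
      have hI2 : ¬(p.castSucc ∈ I ∧ p.succ ∈ I) := hnotboth I hc hw
      have ht := containsReduced_transport cs Q' Q p.predAbove I (hφmono I hI2)
        (fun i _ => hQφ i) ⟨I, subset_rfl, hc, hw⟩
      refine containsReduced_mono cs Q ?_ ht
      intro j hj
      obtain ⟨i, hiI, rfl⟩ := Finset.mem_image.1 hj
      have hiF : i ∉ F := Finset.mem_compl.1 (hIF hiI)
      have hipc : i ≠ p.castSucc := fun h => hiF (h ▸ hboth.1)
      have hips : i ≠ p.succ := fun h => hiF (h ▸ hboth.2)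
      have hipc' : (i:ℕ) ≠ (p:ℕ) := fun h => hipc (Fin.ext (by simp [h]))
      have hips' : (i:ℕ) ≠ (p:ℕ) + 1 := fun h => hips (Fin.ext (by simp [h]))
      rw [hmemTc]
      have heq : ψ (p.predAbove i) = i := by
        refine Fin.ext ?_
        rw [hψv, hφv]
        split_ifs <;> omega
      rwa [heq]
    · intro hface
      have ht := containsReduced_transport cs Q Q' ψ (insert p σ)ᶜ (hψmono.strictMonoOn _)
        (fun i _ => hQψ i) hface
      refine containsReduced_mono cs Q' ?_ ht
      intro j hj
      obtain ⟨i, hi, rfl⟩ := Finset.mem_image.1 hj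
      exact Finset.mem_compl.2 ((hmemTc i).1 hi)


end SubwordComplexNil
end

section
/- Let Q be a word of length m in the simple reflections of a finite Coxeter system (W,S), let Q' be obtained from Q by doubling the letter at position p (doubled positions p and p+1 of Q'), and let ρ ∈ W. Assume {p} is NOT a face of Δ(Q,ρ). Then Δ(Q',ρ) is isomorphic to the suspension of Δ(Q,ρ) with suspension vertices p and p+1: a set F ⊆ {1,…,m+1} is a face of Δ(Q',ρ) if and only if F contains at most one of p, p+1 and ψ^{-1}(F \ {p,p+1}) is a face of Δ(Q,ρ), where ψ : {1,…,m} \ {p} → {1,…,m+1} \ {p,p+1} is the order-preserving bijection (ψ(i) = i for i < p, ψ(i) = i+1 for i > p). (Note that no face of Δ(Q,ρ) contains p in this case.) -/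
namespace SubwordComplexNil

variable {B W : Type*} [Group W] {M : CoxeterMatrix B}

/-! ### Auxiliary lemmas -/

section SortLemmas

variable {α β : Type*} [LinearOrder α] [LinearOrder β] [DecidableEq β]

lemma sort_image_strictMono {f : α → β} (hf : StrictMono f) (s : Finset α) :
    ((s.image f).sort (· ≤ ·)) = (s.sort (· ≤ ·)).map f := by
  refine (fun hp h1 h2 => List.Perm.eq_of_pairwise' (r := (· ≤ ·)) h1 h2 hp) ?_ ?_ ?_
  · rw [List.perm_ext_iff_of_nodup (Finset.sort_nodup _ _)
      ((Finset.sort_nodup _ _).map hf.injective)]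
    intro a
    simp [Finset.mem_sort, Finset.mem_image]
  · exact Finset.pairwise_sort _ _
  · exact List.pairwise_map.mpr ((Finset.pairwise_sort s _).imp fun h => hf.monotone h)

lemma sorted_eq_cons {l : List α} (hs : l.Pairwise (· ≤ ·)) {x : α} (hx : x ∈ l)
    (hmin : ∀ y ∈ l, x ≤ y) : ∃ t, l = x :: t := by
  cases l with
  | nil => simp at hx
  | cons a t =>
    refine ⟨t, ?_⟩
    have hax : a = x := by
      refine le_antisymm ?_ (hmin a (by simp))
      rcases List.mem_cons.mp hx with h | h
      · exact le_of_eq h.symm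
      · exact (List.pairwise_cons.mp hs).1 x h
    rw [hax]

end SortLemmas

lemma sorted_split_pair {n : ℕ} (p : Fin n) {l : List (Fin (n + 1))}
    (hs : l.Pairwise (· ≤ ·)) (hn : l.Nodup)
    (h1 : p.castSucc ∈ l) (h2 : p.succ ∈ l) :
    ∃ X Y, l = X ++ p.castSucc :: p.succ :: Y := by
  classical
  set X := l.filter (fun x => decide (x < p.castSucc)) with hXdef
  set Z := l.filter (fun x => !decide (x < p.castSucc)) with hZdef
  have hperm : List.Perm (X ++ Z) l := List.filter_append_perm _ l
  have hXZ : l = X ++ Z := by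
    refine (List.Perm.eq_of_pairwise' ?_ hs hperm).symm
    rw [List.pairwise_append]
    refine ⟨hs.filter _, hs.filter _, ?_⟩
    intro a ha b hb
    have ha' : a < p.castSucc := by
      have := List.of_mem_filter ha; simpa using this
    have hb' : ¬ b < p.castSucc := by
      have := List.of_mem_filter hb; simpa using this
    exact le_of_lt (lt_of_lt_of_le ha' (not_lt.mp hb'))
  have hZmem : ∀ y ∈ Z, p.castSucc ≤ y := by
    intro y hy
    have := List.of_mem_filter hy
    simpa using this
  have hZs : Z.Pairwise (· ≤ ·) := hs.filter _
  have hZn : Z.Nodup := hn.filter _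
  have hcZ : p.castSucc ∈ Z := by
    rw [hZdef, List.mem_filter]
    exact ⟨h1, by simp⟩
  have hsZ : p.succ ∈ Z := by
    rw [hZdef, List.mem_filter]
    refine ⟨h2, ?_⟩
    simp only [Bool.not_eq_true', decide_eq_false_iff_not, not_lt]
    exact le_of_lt (Fin.castSucc_lt_succ (i := p))
  obtain ⟨Z', hZ'⟩ := sorted_eq_cons hZs hcZ hZmem
  rw [hZ'] at hZs hZn hsZ
  have hsZ' : p.succ ∈ Z' := by
    rcases List.mem_cons.mp hsZ with h | h
    · exact absurd h.symm (Fin.castSucc_lt_succ (i := p)).ne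
    · exact h
  have hZ'min : ∀ y ∈ Z', p.succ ≤ y := by
    intro y hy
    have h1' : p.castSucc ≤ y := (List.pairwise_cons.mp hZs).1 y hy
    have h2' : y ≠ p.castSucc := by
      intro h; exact (List.nodup_cons.mp hZn).1 (h ▸ hy)
    have h1n : (p : ℕ) ≤ (y : ℕ) := by simpa [Fin.le_def] using h1'
    have h2n : (y : ℕ) ≠ (p : ℕ) := by
      intro h; exact h2' (Fin.ext (by simpa using h))
    rw [Fin.le_def]
    simp only [Fin.val_succ]
    omega
  obtain ⟨Y, hY⟩ := sorted_eq_cons (List.pairwise_cons.mp hZs).2 hsZ' hZ'min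
  exact ⟨X, Y, by rw [hXZ, hZ', hY]⟩

section Words

variable {m : ℕ}

lemma wordProd_map_image (cs : CoxeterSystem M W) {Q : Fin m → B}
    {Q' : Fin (m + 1) → B} {f : Fin m → Fin (m + 1)} (hf : StrictMono f)
    (hQ : ∀ i, Q' (f i) = Q i) (J : Finset (Fin m)) :
    ((J.image f).sort (· ≤ ·)).map Q' = (J.sort (· ≤ ·)).map Q := by
  rw [sort_image_strictMono hf, List.map_map]
  exact List.map_congr_left fun i _ => hQ i

lemma doubleAt_castSucc (Q : Fin m → B) (p : Fin m) :
    doubleAt Q p p.castSucc = Q p := by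
  rw [doubleAt, dif_pos (by simp)]
  exact congrArg Q (Fin.ext (by simp))

lemma doubleAt_succ (Q : Fin m → B) (p : Fin m) :
    doubleAt Q p p.succ = Q p := by
  rw [doubleAt, dif_neg (by simp)]
  exact congrArg Q (Fin.ext (by simp))

lemma doubleAt_comp_succAbove_castSucc (Q : Fin m → B) (p : Fin m) (i : Fin m) :
    doubleAt Q p (p.castSucc.succAbove i) = Q i := by
  rcases lt_or_ge i.castSucc p.castSucc with h | h
  · have h' : (i : ℕ) < (p : ℕ) := by
      simp only [Fin.lt_def, Fin.coe_castSucc] at h; exact h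
    rw [Fin.succAbove_of_castSucc_lt _ _ h, doubleAt,
      dif_pos (by simp only [Fin.coe_castSucc]; omega)]
    exact congrArg Q (Fin.ext (by simp))
  · have hpi : (p : ℕ) ≤ (i : ℕ) := by
      simp only [Fin.le_def, Fin.coe_castSucc] at h; exact h
    rw [Fin.succAbove_of_le_castSucc _ _ h, doubleAt,
      dif_neg (by simp only [Fin.val_succ, not_le]; omega)]
    exact congrArg Q (Fin.ext (by simp))

lemma doubleAt_comp_succAbove_succ (Q : Fin m → B) (p : Fin m) (i : Fin m) :
    doubleAt Q p (p.succ.succAbove i) = Q i := by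
  rcases lt_or_ge i.castSucc p.succ with h | h
  · have hip : (i : ℕ) ≤ (p : ℕ) := by
      simp only [Fin.lt_def, Fin.coe_castSucc, Fin.val_succ] at h; omega
    rw [Fin.succAbove_of_castSucc_lt _ _ h, doubleAt,
      dif_pos (by simp only [Fin.coe_castSucc]; omega)]
    exact congrArg Q (Fin.ext (by simp))
  · have hpi : (p : ℕ) < (i : ℕ) := by
      simp only [Fin.le_def, Fin.coe_castSucc, Fin.val_succ] at h; omega
    rw [Fin.succAbove_of_le_castSucc _ _ (by
      simp only [Fin.le_def, Fin.val_succ, Fin.coe_castSucc]; omega),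
      doubleAt, dif_neg (by simp only [Fin.val_succ, not_le]; omega)]
    exact congrArg Q (Fin.ext (by simp))

lemma succAbove_castSucc_self (p : Fin m) : p.castSucc.succAbove p = p.succ :=
  Fin.succAbove_of_le_castSucc _ _ le_rfl

lemma succAbove_succ_self (p : Fin m) : p.succ.succAbove p = p.castSucc :=
  Fin.succAbove_of_castSucc_lt _ _ (Fin.castSucc_lt_succ (i := p))

lemma succAbove_eq_of_ne (p : Fin m) {j : Fin m} (hj : j ≠ p) :
    p.succ.succAbove j = p.castSucc.succAbove j := by
  rcases lt_or_gt_of_ne (fun h : (j : ℕ) = (p : ℕ) => hj (Fin.ext h)) with h | h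
  · rw [Fin.succAbove_of_castSucc_lt _ _ (by
      simp only [Fin.lt_def, Fin.coe_castSucc, Fin.val_succ]; omega),
      Fin.succAbove_of_castSucc_lt _ _ (by
      simp only [Fin.lt_def, Fin.coe_castSucc]; omega)]
  · rw [Fin.succAbove_of_le_castSucc _ _ (by
      simp only [Fin.le_def, Fin.coe_castSucc, Fin.val_succ]; omega),
      Fin.succAbove_of_le_castSucc _ _ (by
      simp only [Fin.le_def, Fin.coe_castSucc]; omega)]

lemma image_preimage_succAbove (d : Fin (m + 1)) (I : Finset (Fin (m + 1)))
    (h : d ∉ I) :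
    (I.preimage d.succAbove (Fin.succAbove_right_injective.injOn)).image d.succAbove
      = I := by
  ext j
  simp only [Finset.mem_image, Finset.mem_preimage]
  constructor
  · rintro ⟨i, hi, rfl⟩; exact hi
  · intro hj
    have hne : j ≠ d := fun e => h (e ▸ hj)
    have : j ∈ Set.range d.succAbove := by
      rw [Fin.range_succAbove]; exact hne
    obtain ⟨i, rfl⟩ := this
    exact ⟨i, hj, rfl⟩

end Words

/-- If `{p}` is not a face of `Δ(Q, ρ)`, then `Δ(Q', ρ)` is the suspension of
`Δ(Q, ρ)` with suspension vertices the two doubled positions: `F` is a face of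
`Δ(Q', ρ)` iff `F` contains at most one of the doubled positions and
`ψ⁻¹(F \ {p, p+1})` is a face of `Δ(Q, ρ)`, where the order-preserving bijection `ψ`
is realized by `(p.castSucc).succAbove`. -/
theorem doubled_word_suspension [Finite W] (cs : CoxeterSystem M W)
    {m : ℕ} (Q : Fin m → B) (p : Fin m) (ρ : W)
    (hp : ¬ IsFace cs Q ρ {p}) (F : Finset (Fin (m + 1))) :
    IsFace cs (doubleAt Q p) ρ F ↔
      (¬(p.castSucc ∈ F ∧ p.succ ∈ F) ∧
        IsFace cs Q ρ ((F \ {p.castSucc, p.succ}).preimage p.castSucc.succAbove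
          (Fin.succAbove_right_injective.injOn))) := by
  classical
  set Q' := doubleAt Q p with hQ'def
  set G := (F \ {p.castSucc, p.succ}).preimage p.castSucc.succAbove
      (Fin.succAbove_right_injective.injOn) with hGdef
  have hne : p.castSucc ≠ p.succ := (Fin.castSucc_lt_succ (i := p)).ne
  -- a general helper to build a face of `Δ(Q, ρ)` from a witness for `Q'`
  have buildG : ∀ (d : Fin (m + 1)), (d = p.castSucc ∨ d = p.succ) →
      ∀ I : Finset (Fin (m + 1)), I ⊆ Fᶜ → I.card = cs.length ρ →
      cs.wordProd ((I.sort (· ≤ ·)).map Q') = ρ → d ∉ I → IsFace cs Q ρ G := by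
    rintro d hd I hIF hcard hprod hdI
    have hstrict : StrictMono d.succAbove := Fin.strictMono_succAbove d
    have hQd : ∀ i, Q' (d.succAbove i) = Q i := by
      rcases hd with rfl | rfl
      · exact doubleAt_comp_succAbove_castSucc Q p
      · exact doubleAt_comp_succAbove_succ Q p
    set J := I.preimage d.succAbove (Fin.succAbove_right_injective.injOn) with hJdef
    have himg : J.image d.succAbove = I := image_preimage_succAbove d I hdI
    refine ⟨J, ?_, ?_, ?_⟩
    · intro j hj
      have hjI : d.succAbove j ∈ I := Finset.mem_preimage.mp hj
      have hjF : d.succAbove j ∉ F := Finset.mem_compl.mp (hIF hjI)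
      rw [Finset.mem_compl, hGdef, Finset.mem_preimage, Finset.mem_sdiff]
      by_cases hjp : j = p
      · subst hjp
        rw [succAbove_castSucc_self]
        rintro ⟨-, habs⟩
        exact habs (by simp)
      · have : p.castSucc.succAbove j = d.succAbove j := by
          rcases hd with rfl | rfl
          · rfl
          · exact (succAbove_eq_of_ne p hjp).symm
        rw [this]
        rintro ⟨habs, -⟩
        exact hjF habs
    · rw [← hcard, ← himg, Finset.card_image_of_injective _ Fin.succAbove_right_injective]
    · rw [← wordProd_map_image cs hstrict hQd J, himg, hprod]
  constructor
  · rintro ⟨I, hIF, hcard, hprod⟩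
    have hcompl : ∀ i ∈ I, i ∉ F := fun i hi => Finset.mem_compl.mp (hIF hi)
    constructor
    · -- not both doubled positions in F
      rintro ⟨hcF, hsF⟩
      have hcI : p.castSucc ∉ I := fun h => hcompl _ h hcF
      have hsI : p.succ ∉ I := fun h => hcompl _ h hsF
      set J := I.preimage p.castSucc.succAbove (Fin.succAbove_right_injective.injOn)
        with hJdef
      have himg : J.image p.castSucc.succAbove = I := image_preimage_succAbove _ I hcI
      refine hp ⟨J, ?_, ?_, ?_⟩
      · intro j hj
        rw [Finset.mem_compl, Finset.mem_singleton]
        rintro rfl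
        have := Finset.mem_preimage.mp hj
        rw [succAbove_castSucc_self] at this
        exact hsI this
      · rw [← hcard, ← himg,
          Finset.card_image_of_injective _ Fin.succAbove_right_injective]
      · rw [← wordProd_map_image cs (Fin.strictMono_succAbove _)
          (doubleAt_comp_succAbove_castSucc Q p) J, himg, hprod]
    · -- G is a face
      by_cases hsI : p.succ ∈ I
      · by_cases hcI : p.castSucc ∈ I
        · -- both doubled positions in I: contradiction with minimality of length
          exfalso
          obtain ⟨X, Y, hXY⟩ := sorted_split_pair p (Finset.pairwise_sort I _)
            (Finset.sort_nodup I _) ((Finset.mem_sort _).mpr hcI)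
            ((Finset.mem_sort _).mpr hsI)
          have hlen : (I.sort (· ≤ ·)).length = cs.length ρ := by
            rw [Finset.length_sort]; exact hcard
          have hprod' : cs.wordProd ((X ++ Y).map Q') = ρ := by
            rw [← hprod, hXY]
            simp only [List.map_append, List.map_cons, cs.wordProd_append,
              cs.wordProd_cons]
            rw [hQ'def, doubleAt_castSucc, doubleAt_succ, ← mul_assoc,
              ← mul_assoc, mul_assoc (cs.wordProd (List.map Q' X)),
              cs.simple_mul_simple_self, mul_one]
          have hle := cs.length_wordProd_le ((X ++ Y).map Q')
          rw [hprod'] at hle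
          rw [hXY] at hlen
          simp only [List.length_append, List.length_cons, List.length_map] at hle hlen
          omega
        · exact buildG p.castSucc (Or.inl rfl) I hIF hcard hprod hcI
      · exact buildG p.succ (Or.inr rfl) I hIF hcard hprod hsI
  · rintro ⟨hnb, J, hJG, hcard, hprod⟩
    -- `p` must belong to `J`
    have hpJ : p ∈ J := by
      by_contra hpJ
      exact hp ⟨J, fun j hj => by
        rw [Finset.mem_compl, Finset.mem_singleton]
        rintro rfl; exact hpJ hj, hcard, hprod⟩
    have build : ∀ d : Fin (m + 1), (d = p.castSucc ∨ d = p.succ) →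
        d.succAbove p ∉ F → IsFace cs Q' ρ F := by
      rintro d hd hdF
      have hQd : ∀ i, Q' (d.succAbove i) = Q i := by
        rcases hd with rfl | rfl
        · exact doubleAt_comp_succAbove_castSucc Q p
        · exact doubleAt_comp_succAbove_succ Q p
      have hdψ : ∀ j : Fin m, j ≠ p → d.succAbove j = p.castSucc.succAbove j := by
        rcases hd with rfl | rfl
        · intro j _; rfl
        · intro j hj; exact succAbove_eq_of_ne p hj
      refine ⟨J.image d.succAbove, ?_, ?_, ?_⟩
      · intro i hi
        obtain ⟨j, hjJ, rfl⟩ := Finset.mem_image.mp hi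
        rw [Finset.mem_compl]
        by_cases hjp : j = p
        · subst hjp; exact hdF
        · rw [hdψ j hjp]
          have hjG : j ∉ G := Finset.mem_compl.mp (hJG hjJ)
          rw [hGdef, Finset.mem_preimage, Finset.mem_sdiff] at hjG
          intro habs
          apply hjG
          refine ⟨habs, ?_⟩
          intro hmem
          rcases Finset.mem_insert.mp hmem with h | h
          · have hr : p.castSucc.succAbove j ∈ Set.range p.castSucc.succAbove := ⟨j, rfl⟩
            rw [Fin.range_succAbove] at hr
            exact Set.mem_compl_singleton_iff.mp hr h
          · rw [Finset.mem_singleton] at h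
            apply hjp
            apply Fin.succAbove_right_injective (p := p.castSucc)
            rw [h, succAbove_castSucc_self]
      · rw [Finset.card_image_of_injective _ Fin.succAbove_right_injective, hcard]
      · rw [wordProd_map_image cs (Fin.strictMono_succAbove d) hQd J, hprod]
    by_cases hcF : p.castSucc ∈ F
    · refine build p.castSucc (Or.inl rfl) ?_
      rw [succAbove_castSucc_self]
      exact fun h => hnb ⟨hcF, h⟩
    · refine build p.succ (Or.inr rfl) ?_
      rw [succAbove_succ_self]
      exact hcF

end SubwordComplexNil
end

section
/- Let K be a simplicial complex on a vertex set V and let a, b, c be three distinct elements not in V. Let E denote the full edge complex {∅, {a}, {b}, {a,b}} and let K ∗ E be the join of K and E. Then the edge subdivision of K ∗ E along the edge {a,b} with new vertex c is equal to the join (cone_c(K)) ∗ {∅, {a}, {b}}, i.e. the suspension with suspension vertices a, b of the cone over K with apex c, where cone_c(K) = {σ : σ ∈ K} ∪ {σ ∪ {c} : σ ∈ K}. -/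
namespace SubwordComplexNil

variable {U : Type*} [DecidableEq U]

/-- The join of two simplicial complexes (given as sets of faces on a common ambient
vertex type, with disjoint vertex sets). -/
def Join (X Y : Set (Finset U)) : Set (Finset U) :=
  {F | ∃ σ ∈ X, ∃ τ ∈ Y, F = σ ∪ τ}

/-- The link of a face `η` in a simplicial complex `X`. -/
def LinkSet (X : Set (Finset U)) (η : Finset U) : Set (Finset U) :=
  {τ | η ∪ τ ∈ X ∧ Disjoint η τ}

/-- The edge subdivision of `X` along the edge `{s, t}` with new vertex `r`. -/
def SubdivSet (X : Set (Finset U)) (s t r : U) : Set (Finset U) :=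
  {F | F ∈ X ∧ ¬ {s, t} ⊆ F} ∪
    {F | ∃ σ ∈ LinkSet X {s, t},
      F = insert r σ ∨ F = insert r (insert s σ) ∨ F = insert r (insert t σ)}

/-- The cone over `X` with apex `c`. -/
def Cone (X : Set (Finset U)) (c : U) : Set (Finset U) :=
  {F | ∃ σ ∈ X, F = σ ∨ F = insert c σ}

lemma pair_subset_cases {a b : U} {τ : Finset U} (h : τ ⊆ {a, b}) :
    τ = ∅ ∨ τ = {a} ∨ τ = {b} ∨ τ = {a, b} := by
  by_cases ha : a ∈ τ <;> by_cases hb : b ∈ τ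
  · refine .inr (.inr (.inr (Finset.Subset.antisymm h ?_)))
    intro x hx
    simp only [Finset.mem_insert, Finset.mem_singleton] at hx
    rcases hx with rfl | rfl <;> assumption
  · refine .inr (.inl (Finset.Subset.antisymm ?_ (by simpa using ha)))
    intro x hx
    have := h hx
    simp only [Finset.mem_insert, Finset.mem_singleton] at this ⊢
    rcases this with rfl | rfl
    · rfl
    · exact absurd hx hb
  · refine .inr (.inr (.inl (Finset.Subset.antisymm ?_ (by simpa using hb))))
    intro x hx
    have := h hx
    simp only [Finset.mem_insert, Finset.mem_singleton] at this ⊢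
    rcases this with rfl | rfl
    · exact absurd hx ha
    · rfl
  · refine .inl (Finset.eq_empty_of_forall_notMem ?_)
    intro x hx
    have := h hx
    simp only [Finset.mem_insert, Finset.mem_singleton] at this
    rcases this with rfl | rfl
    · exact ha hx
    · exact hb hx

/-- Let `K` be a simplicial complex on a vertex set `V` and let `a`, `b`, `c` be three
distinct new vertices.  Then the edge subdivision of `K ∗ {∅,{a},{b},{a,b}}` along the
edge `{a, b}` with new vertex `c` equals the join of the cone over `K` with apex `c`
and the complex `{∅, {a}, {b}}`, i.e. the suspension (with suspension vertices `a`,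
`b`) of the cone over `K`. -/
theorem subdivision_of_join_edge_eq_suspension_of_cone {V : Type*} [DecidableEq V]
    (K : Set (Finset V)) (hK : ∀ σ ∈ K, ∀ τ ⊆ σ, τ ∈ K) :
    SubdivSet
      (Join {F : Finset (V ⊕ Fin 3) | ∃ σ ∈ K, F = σ.image Sum.inl}
        {F : Finset (V ⊕ Fin 3) | F ⊆ {Sum.inr 0, Sum.inr 1}})
      (Sum.inr 0) (Sum.inr 1) (Sum.inr 2) =
    Join (Cone {F : Finset (V ⊕ Fin 3) | ∃ σ ∈ K, F = σ.image Sum.inl} (Sum.inr 2))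
      {(∅ : Finset (V ⊕ Fin 3)), {Sum.inr 0}, {Sum.inr 1}} := by
  set a : V ⊕ Fin 3 := Sum.inr 0 with ha
  set b : V ⊕ Fin 3 := Sum.inr 1 with hb
  set c : V ⊕ Fin 3 := Sum.inr 2 with hc
  have hinl : ∀ (σ : Finset V) (k : Fin 3), Sum.inr k ∉ σ.image Sum.inl := by
    intro σ k h
    simp at h
  set KI : Set (Finset (V ⊕ Fin 3)) := {F | ∃ σ ∈ K, F = σ.image Sum.inl} with hKI
  ext F
  constructor
  · rintro (⟨⟨σ', ⟨σ, hσ, rfl⟩, τ, hτ, rfl⟩, hFne⟩ | ⟨σ₀, ⟨hlink, hdisj⟩, hF⟩)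
    · -- old faces not containing {a, b}
      simp only [Set.mem_setOf_eq] at hτ
      rcases pair_subset_cases hτ with rfl | rfl | rfl | rfl
      · exact ⟨_, ⟨_, ⟨σ, hσ, rfl⟩, Or.inl rfl⟩, ∅, by simp, rfl⟩
      · exact ⟨_, ⟨_, ⟨σ, hσ, rfl⟩, Or.inl rfl⟩, {a}, by simp, rfl⟩
      · exact ⟨_, ⟨_, ⟨σ, hσ, rfl⟩, Or.inl rfl⟩, {b}, by simp, rfl⟩
      · exact absurd (Finset.subset_union_right) hFne
    · -- new faces containing c
      obtain ⟨σ', ⟨σ, hσ, rfl⟩, τ, hτ, heq⟩ := hlink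
      simp only [Set.mem_setOf_eq] at hτ
      have hσ₀ : σ₀ = σ.image Sum.inl := by
        ext x
        constructor
        · intro hx
          have : x ∈ σ.image Sum.inl ∪ τ := heq ▸ Finset.mem_union_right _ hx
          rcases Finset.mem_union.1 this with h | h
          · exact h
          · exfalso
            have := hτ h
            have hxab : x ∈ ({a, b} : Finset (V ⊕ Fin 3)) := this
            exact (Finset.disjoint_left.1 hdisj hxab) hx
        · intro hx
          have : x ∈ ({a, b} : Finset (V ⊕ Fin 3)) ∪ σ₀ := by
            rw [heq]
            exact Finset.mem_union_left _ hx
          rcases Finset.mem_union.1 this with h | h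
          · exfalso
            obtain ⟨v, _, rfl⟩ := Finset.mem_image.1 hx
            simp only [Finset.mem_insert, Finset.mem_singleton, ha, hb] at h
            rcases h with h | h <;> exact Sum.inl_ne_inr h
          · exact h
      subst hσ₀
      have hcone : insert c (σ.image Sum.inl) ∈
          Cone KI c := ⟨_, ⟨σ, hσ, rfl⟩, Or.inr rfl⟩
      rcases hF with rfl | rfl | rfl
      · exact ⟨_, hcone, ∅, by simp, by simp⟩
      · refine ⟨_, hcone, {a}, by simp, ?_⟩
        ext x
        simp only [Finset.mem_insert, Finset.mem_union, Finset.mem_singleton]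
        tauto
      · refine ⟨_, hcone, {b}, by simp, ?_⟩
        ext x
        simp only [Finset.mem_insert, Finset.mem_union, Finset.mem_singleton]
        tauto
  · rintro ⟨G, ⟨σ', ⟨σ, hσ, rfl⟩, hG⟩, τ, hτ, rfl⟩
    simp only [Set.mem_insert_iff, Set.mem_singleton_iff] at hτ
    have hnotinl : ∀ (k : Fin 3) (t : Finset (V ⊕ Fin 3)),
        t = ∅ ∨ t = {a} ∨ t = {b} → Sum.inr k ∈ σ.image Sum.inl ∪ t →
        (Sum.inr k = a ∧ t = {a}) ∨ (Sum.inr k = b ∧ t = {b}) := by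
      intro k t ht hmem
      rcases Finset.mem_union.1 hmem with h | h
      · exact absurd h (hinl σ k)
      · rcases ht with rfl | rfl | rfl
        · simp at h
        · exact Or.inl ⟨Finset.mem_singleton.1 h, rfl⟩
        · exact Or.inr ⟨Finset.mem_singleton.1 h, rfl⟩
    rcases hG with rfl | rfl
    · -- G = σ.image Sum.inl : old face
      left
      refine ⟨⟨_, ⟨σ, hσ, rfl⟩, τ, ?_, rfl⟩, ?_⟩
      · rcases hτ with rfl | rfl | rfl <;> simp [ha, hb]
      · intro hsub
        have haF := hsub (Finset.mem_insert_self _ _)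
        have hbF := hsub (Finset.mem_insert_of_mem (Finset.mem_singleton_self b))
        rcases hnotinl 0 τ (by tauto) haF with ⟨_, rfl⟩ | ⟨h, _⟩
        · rcases hnotinl 1 {a} (by tauto) hbF with ⟨h, _⟩ | ⟨_, h⟩
          · exact absurd (Sum.inr_injective h) (by decide)
          · exact absurd (Sum.inr_injective (Finset.singleton_injective h)) (by decide)
        · exact absurd (Sum.inr_injective h) (by decide)
    · -- G = insert c (σ.image Sum.inl) : new face
      right
      have hdisj : Disjoint ({a, b} : Finset (V ⊕ Fin 3)) (σ.image Sum.inl) := by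
        rw [Finset.disjoint_left]
        intro x hx
        simp only [Finset.mem_insert, Finset.mem_singleton, ha, hb] at hx
        rcases hx with rfl | rfl <;> exact hinl σ _
      have hlink : σ.image Sum.inl ∈
          LinkSet (Join KI {F : Finset (V ⊕ Fin 3) | F ⊆ {a, b}}) {a, b} := by
        refine ⟨⟨_, ⟨σ, hσ, rfl⟩, {a, b}, by simp, ?_⟩, hdisj⟩
        exact Finset.union_comm _ _
      refine ⟨σ.image Sum.inl, hlink, ?_⟩
      rcases hτ with rfl | rfl | rfl
      · exact Or.inl (by simp)
      · refine Or.inr (Or.inl ?_)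
        ext x
        simp only [Finset.mem_insert, Finset.mem_union, Finset.mem_singleton]
        tauto
      · refine Or.inr (Or.inr ?_)
        ext x
        simp only [Finset.mem_insert, Finset.mem_union, Finset.mem_singleton]
        tauto

end SubwordComplexNil
end

section
/- Let (W,S) be a finite Coxeter system, let Q be a word in the simple reflections S, and let ρ ∈ W. Then Q contains a reduced expression of ρ as a subword if and only if there exists a reduced word for the Demazure product δ(Q) that contains a reduced expression of ρ as a subword. -/
namespace SubwordComplexNil

variable {B W : Type*} [Group W] {M : CoxeterMatrix B}

open List CoxeterSystem

/-- One step of the Demazure product: multiply by the simple reflection `s i` if this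
increases the length, otherwise do nothing. -/
noncomputable def demazureStep (cs : CoxeterSystem M W) (w : W) (i : B) : W :=
  if cs.length w < cs.length (w * cs.simple i) then w * cs.simple i else w

/-- The Demazure (0-Hecke) product of a word. -/
noncomputable def demazure (cs : CoxeterSystem M W) (Q : List B) : W :=
  Q.foldl (demazureStep cs) 1

/-- The word `Q` contains a reduced expression of `ρ` as a subword. -/
def ContainsReducedWord (cs : CoxeterSystem M W) (Q : List B) (ρ : W) : Prop :=
  ∃ R : List B, R.Sublist Q ∧ R.length = cs.length ρ ∧ cs.wordProd R = ρ


variable (cs : CoxeterSystem M W)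

local prefix:100 "σ" => cs.simple
local prefix:100 "π" => cs.wordProd
local prefix:100 "ℓ" => cs.length

noncomputable local instance : DecidableEq W := Classical.decEq W

/-- The basic involution underlying the sign representation. -/
noncomputable def sgnFun (i : B) : W × ℤˣ → W × ℤˣ :=
  fun p => (σ i * p.1 * σ i, if p.1 = σ i then -p.2 else p.2)

lemma sgnFun_involutive (i : B) : Function.Involutive (sgnFun cs i) := by
  rintro ⟨t, e⟩
  have h1 : σ i * t * σ i = σ i ↔ t = σ i := by
    constructor
    · intro h
      have := congrArg (fun x => σ i * x * σ i) h
      simpa [mul_assoc, cs.simple_mul_simple_cancel_left, cs.simple_mul_simple_self] using this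
    · intro h
      rw [h]
      simp [cs.simple_mul_simple_self, mul_assoc, cs.simple_mul_simple_cancel_left]
  simp only [sgnFun]
  rcases eq_or_ne t (σ i) with h | h
  · subst h
    simp [h1, cs.simple_mul_simple_self, mul_assoc, cs.simple_mul_simple_cancel_left]
  · simp only [if_neg h, if_neg (h1.not.mpr h)]
    rw [← mul_assoc, ← mul_assoc]
    simp [cs.simple_mul_simple_cancel_left, cs.simple_mul_simple_self, mul_assoc]

noncomputable def sgnPerm (i : B) : Equiv.Perm (W × ℤˣ) := (sgnFun_involutive cs i).toPerm

lemma sgnPerm_apply (i : B) (t : W) (ε : ℤˣ) :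
    sgnPerm cs i (t, ε) = (σ i * t * σ i, if t = σ i then -ε else ε) := rfl

lemma ite_neg_eq_mul (P : Prop) [Decidable P] (x : ℤˣ) :
    (if P then -x else x) = x * (if P then -1 else 1) := by
  split <;> simp

lemma simple_conj_eq_iff (i : B) (t c : W) :
    σ i * t * σ i = c ↔ t = σ i * c * σ i := by
  constructor
  · intro h
    rw [← h, ← mul_assoc, ← mul_assoc, cs.simple_mul_simple_self]
    simp [mul_assoc, cs.simple_mul_simple_self]
  · intro h
    rw [h, ← mul_assoc, ← mul_assoc, cs.simple_mul_simple_self]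
    simp [mul_assoc, cs.simple_mul_simple_self]

lemma sgnPerm_mul_pow (i i' : B) (k : ℕ) (t : W) (ε : ℤˣ) :
    ((sgnPerm cs i * sgnPerm cs i') ^ k) (t, ε) =
      ((σ i * σ i') ^ k * t * (σ i' * σ i) ^ k,
        ε * ∏ j ∈ Finset.range (2 * k), (if t = (σ i' * σ i) ^ j * σ i' then (-1 : ℤˣ) else 1)) := by
  induction k generalizing t ε with
  | zero => simp
  | succ k ih =>
    rw [pow_succ, Equiv.Perm.mul_apply]
    have hX : (sgnPerm cs i * sgnPerm cs i') (t, ε) =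
        ((σ i * σ i') * t * (σ i' * σ i),
          ε * ((if t = σ i' then (-1 : ℤˣ) else 1) *
            (if t = (σ i' * σ i) * σ i' then (-1 : ℤˣ) else 1))) := by
      rw [Equiv.Perm.mul_apply, sgnPerm_apply, sgnPerm_apply]
      have hc : σ i' * t * σ i' = σ i ↔ t = (σ i' * σ i) * σ i' := by
        rw [simple_conj_eq_iff cs, mul_assoc]
      rw [Prod.mk.injEq]
      constructor
      · -- first components
        simp [mul_assoc]
      · rw [ite_neg_eq_mul, ite_neg_eq_mul]
        rw [if_congr hc rfl rfl, mul_assoc]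
    rw [hX, ih]
    rw [Prod.mk.injEq]
    constructor
    · -- first component
      simp only [pow_succ, pow_succ']
      simp only [mul_assoc]
      simp only [← mul_assoc]
      rw [mul_assoc ((σ i * σ i') ^ k)]
      simp [mul_assoc, ← pow_succ', ← pow_succ]
    · -- second component
      have hcond : ∀ j : ℕ, ((σ i * σ i') * t * (σ i' * σ i) = (σ i' * σ i) ^ j * σ i')
          ↔ (t = (σ i' * σ i) ^ (j + 2) * σ i') := by
        intro j
        have h1 : (σ i * σ i') * t * (σ i' * σ i) = σ i * (σ i' * t * σ i') * σ i := by
          simp [mul_assoc]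
        rw [h1, simple_conj_eq_iff cs, simple_conj_eq_iff cs]
        have h2 : σ i' * (σ i * ((σ i' * σ i) ^ j * σ i') * σ i) * σ i'
            = (σ i' * σ i) ^ (j + 2) * σ i' := by
          have e1 : (σ i' * σ i) ^ (j + 2) = (σ i' * σ i) * ((σ i' * σ i) ^ j * (σ i' * σ i)) := by
            rw [← pow_succ, ← pow_succ']
          rw [e1]
          simp [mul_assoc]
        rw [h2]
      have hprod : (∏ j ∈ Finset.range (2 * k),
            (if (σ i * σ i') * t * (σ i' * σ i) = (σ i' * σ i) ^ j * σ i' then (-1 : ℤˣ) else 1))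
          = ∏ j ∈ Finset.range (2 * k),
            (if t = (σ i' * σ i) ^ (j + 2) * σ i' then (-1 : ℤˣ) else 1) := by
        apply Finset.prod_congr rfl
        intro j _
        exact if_congr (hcond j) rfl rfl
      rw [hprod]
      have h2k : 2 * (k + 1) = 2 + 2 * k := by ring
      rw [h2k, Finset.prod_range_add]
      have h02 : (∏ j ∈ Finset.range 2,
          (if t = (σ i' * σ i) ^ j * σ i' then (-1 : ℤˣ) else 1))
          = (if t = σ i' then (-1 : ℤˣ) else 1) *
            (if t = (σ i' * σ i) * σ i' then (-1 : ℤˣ) else 1) := by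
        rw [Finset.prod_range_succ, Finset.prod_range_one]
        simp
      rw [h02]
      have : ∀ j ∈ Finset.range (2 * k),
          (if t = (σ i' * σ i) ^ (2 + j) * σ i' then (-1 : ℤˣ) else 1)
          = (if t = (σ i' * σ i) ^ (j + 2) * σ i' then (-1 : ℤˣ) else 1) := by
        intro j _
        rw [Nat.add_comm 2 j]
      rw [Finset.prod_congr rfl this, mul_assoc]

lemma sgnPerm_liftable : M.IsLiftable (sgnPerm cs) := by
  intro i i'
  apply Equiv.ext
  rintro ⟨t, ε⟩
  rw [sgnPerm_mul_pow]
  have h1 : (σ i * σ i') ^ M i i' = 1 := cs.simple_mul_simple_pow i i'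
  have h2 : (σ i' * σ i) ^ M i i' = 1 := cs.simple_mul_simple_pow' i i'
  have h2m : 2 * M i i' = M i i' + M i i' := by ring
  have hper : ∀ j : ℕ, (σ i' * σ i) ^ (M i i' + j) = (σ i' * σ i) ^ j := by
    intro j
    rw [pow_add, h2, one_mul]
  rw [h1, h2, h2m, Finset.prod_range_add]
  have : (∏ j ∈ Finset.range (M i i'),
      (if t = (σ i' * σ i) ^ (M i i' + j) * σ i' then (-1 : ℤˣ) else 1))
      = ∏ j ∈ Finset.range (M i i'),
      (if t = (σ i' * σ i) ^ j * σ i' then (-1 : ℤˣ) else 1) := by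
    apply Finset.prod_congr rfl
    intro j _
    rw [hper j]
  rw [this]
  have hsq : ∀ u : ℤˣ, u * u = 1 := fun u => by rw [← sq, Int.units_sq]
  simp [hsq]

/-- The sign representation. -/
noncomputable def sgnRep : W →* Equiv.Perm (W × ℤˣ) :=
  cs.lift ⟨fun i => sgnPerm cs i, sgnPerm_liftable cs⟩

lemma sgnRep_simple (i : B) : sgnRep cs (σ i) = sgnPerm cs i :=
  cs.lift_apply_simple (sgnPerm_liftable cs) i

/-- The sign of `t` relative to `w`. -/
noncomputable def sgn (w t : W) : ℤˣ := ((sgnRep cs w) (t, 1)).2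

lemma sgnRep_wordProd (ω : List B) (t : W) (ε : ℤˣ) :
    sgnRep cs (π ω) (t, ε) =
      (π ω * t * (π ω)⁻¹, ε * (-1 : ℤˣ) ^ ((cs.rightInvSeq ω).count t)) := by
  induction ω generalizing t ε with
  | nil => simp
  | cons i ω ih =>
    rw [cs.wordProd_cons, map_mul, Equiv.Perm.mul_apply, ih, sgnRep_simple, sgnPerm_apply]
    rw [Prod.mk.injEq]
    have hx : (π ω * t * (π ω)⁻¹ = σ i) ↔ ((π ω)⁻¹ * σ i * π ω = t) := by
      constructor
      · intro h; rw [← h]; group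
      · intro h; rw [← h]; group
    constructor
    · rw [mul_inv_rev, cs.inv_simple]
      group
    · show _ = ε * (-1 : ℤˣ) ^ ((cs.rightInvSeq (i :: ω)).count t)
      have hris : cs.rightInvSeq (i :: ω) = ((π ω)⁻¹ * σ i * π ω) :: cs.rightInvSeq ω := rfl
      rw [hris, List.count_cons]
      simp only [beq_iff_eq]
      rcases eq_or_ne ((π ω)⁻¹ * σ i * π ω) t with h | h
      · rw [if_pos (hx.mpr h), if_pos h, pow_succ]
        simp [mul_neg, mul_neg_one]
      · rw [if_neg (fun hc => h (hx.mp hc)), if_neg h]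
        simp

lemma sgn_eq_count (ω : List B) (t : W) :
    sgn cs (π ω) t = (-1 : ℤˣ) ^ ((cs.rightInvSeq ω).count t) := by
  unfold sgn
  rw [sgnRep_wordProd, one_mul]

lemma sgnRep_apply (w t : W) (ε : ℤˣ) :
    sgnRep cs w (t, ε) = (w * t * w⁻¹, ε * sgn cs w t) := by
  obtain ⟨ω, hω⟩ : ∃ ω, π ω = w := cs.wordProd_surjective w
  subst hω
  rw [sgnRep_wordProd, sgn_eq_count]

lemma sgn_mul (u v t : W) : sgn cs (u * v) t = sgn cs v t * sgn cs u (v * t * v⁻¹) := by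
  unfold sgn
  rw [map_mul, Equiv.Perm.mul_apply, sgnRep_apply, sgnRep_apply, sgnRep_apply, one_mul, one_mul]

lemma sgn_simple (i : B) (t : W) : sgn cs (σ i) t = if t = σ i then -1 else 1 := by
  unfold sgn
  rw [sgnRep_simple, sgnPerm_apply]

lemma sgn_sq (w t : W) : sgn cs w t * sgn cs w t = 1 := by
  rw [← sq, Int.units_sq]

lemma sgn_one (t : W) : sgn cs 1 t = 1 := by
  unfold sgn
  rw [map_one]
  rfl

lemma sgn_inv (w t : W) : sgn cs w⁻¹ t = sgn cs w (w⁻¹ * t * w) := by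
  have h : (1 : ℤˣ) = sgn cs w⁻¹ t * sgn cs w (w⁻¹ * t * w) := by
    have h2 := sgn_mul cs w w⁻¹ t
    rw [mul_inv_cancel, inv_inv, sgn_one] at h2
    exact h2
  have hA : sgn cs w⁻¹ t = (sgn cs w (w⁻¹ * t * w))⁻¹ := eq_inv_of_mul_eq_one_left h.symm
  rw [hA, inv_eq_of_mul_eq_one_right (sgn_sq cs w (w⁻¹ * t * w))]

lemma sgn_isReflection {t : W} (ht : cs.IsReflection t) : sgn cs t t = -1 := by
  obtain ⟨u, j, rfl⟩ := ht
  have a1 : u⁻¹ * (u * σ j * u⁻¹) * u⁻¹⁻¹ = σ j := by group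
  have a2 : σ j * u⁻¹ * (u * σ j * u⁻¹) * (σ j * u⁻¹)⁻¹ = σ j := by
    rw [mul_inv_rev, cs.inv_simple, inv_inv]
    simp only [mul_assoc, inv_mul_cancel_left]
    rw [cs.simple_mul_simple_cancel_left]
  have a3 : u⁻¹ * (u * σ j * u⁻¹) * u = σ j := by group
  nth_rewrite 1 [mul_assoc u (σ j) u⁻¹]
  rw [sgn_mul, sgn_mul, a1, a2, sgn_inv, a3]
  rw [mul_right_comm, sgn_sq, one_mul, sgn_simple, if_pos rfl]

lemma length_lt_of_sgn_neg_one {w t : W} (ht : cs.IsReflection t)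
    (h : sgn cs w t = -1) : ℓ (w * t) < ℓ w := by
  obtain ⟨ω, hred, hw⟩ := cs.exists_reduced_word' w
  subst hw
  have hcount := sgn_eq_count cs ω t
  rw [h] at hcount
  have hodd : (cs.rightInvSeq ω).count t ≠ 0 := by
    intro h0
    rw [h0, pow_zero] at hcount
    exact absurd hcount.symm (by decide)
  have hmem : t ∈ cs.rightInvSeq ω := by
    rw [← List.count_pos_iff]
    omega
  exact (cs.isRightInversion_of_mem_rightInvSeq hred hmem).2

lemma sgn_neg_one_iff {w t : W} (ht : cs.IsReflection t) :
    sgn cs w t = -1 ↔ ℓ (w * t) < ℓ w := by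
  constructor
  · exact length_lt_of_sgn_neg_one cs ht
  · intro h
    rcases Int.units_eq_one_or (sgn cs w t) with h1 | h1
    · exfalso
      have harg : t * t * t⁻¹ = t := by rw [ht.mul_self, one_mul, ht.inv]
      have hwt : sgn cs (w * t) t = -1 := by
        rw [sgn_mul, harg, sgn_isReflection cs ht, h1, mul_one]
      have hlt := length_lt_of_sgn_neg_one cs ht hwt
      rw [mul_assoc, ht.mul_self, mul_one] at hlt
      omega
    · exact h1

/-- Strong exchange property (membership form). -/
lemma mem_rightInvSeq_of_isRightInversion {ω : List B} {t : W}
    (ht : cs.IsReflection t) (hlt : ℓ (π ω * t) < ℓ (π ω)) :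
    t ∈ cs.rightInvSeq ω := by
  have hsgn : sgn cs (π ω) t = -1 := (sgn_neg_one_iff cs ht).mpr hlt
  rw [sgn_eq_count] at hsgn
  have : (cs.rightInvSeq ω).count t ≠ 0 := by
    intro h0
    rw [h0, pow_zero] at hsgn
    exact absurd hsgn (by decide)
  rw [← List.count_pos_iff]
  omega

/-- Strong exchange property. -/
lemma strong_exchange {ω : List B} {t : W} (ht : cs.IsReflection t)
    (hlt : ℓ (π ω * t) < ℓ (π ω)) :
    ∃ j < ω.length, π (ω.eraseIdx j) = π ω * t := by
  have hmem := mem_rightInvSeq_of_isRightInversion cs ht hlt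
  obtain ⟨j, hj, hget⟩ := List.mem_iff_getElem.mp hmem
  rw [cs.length_rightInvSeq] at hj
  refine ⟨j, hj, ?_⟩
  rw [← cs.wordProd_mul_getD_rightInvSeq ω j]
  congr 1
  rw [List.getD_eq_getElem _ _ (by rw [cs.length_rightInvSeq]; exact hj)]
  exact hget

/-- Left exchange: removing a letter of a reduced word. -/
lemma left_exchange' {R : List B} (hred : cs.IsReduced R) {i : B}
    (hlt : ℓ (σ i * π R) < ℓ (π R)) :
    ∃ R', R' <+ R ∧ cs.IsReduced R' ∧ π R' = σ i * π R := by
  have hrev : π (R.reverse) = (π R)⁻¹ := cs.wordProd_reverse R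
  have hlt' : ℓ (π R.reverse * σ i) < ℓ (π R.reverse) := by
    rw [hrev]
    have h1 : (π R)⁻¹ * σ i = (σ i * π R)⁻¹ := by
      rw [mul_inv_rev, cs.inv_simple]
    rw [h1, cs.length_inv, cs.length_inv]
    exact hlt
  obtain ⟨j, hj, hprod⟩ := strong_exchange cs (cs.isReflection_simple i) hlt'
  have e1 : π (R.reverse.eraseIdx j).reverse = σ i * π R := by
    rw [cs.wordProd_reverse, hprod, hrev, mul_inv_rev, cs.inv_simple, inv_inv]
  refine ⟨(R.reverse.eraseIdx j).reverse, ?_, ?_, e1⟩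
  · have h2 : (R.reverse.eraseIdx j).reverse <+ R.reverse.reverse :=
      (List.eraseIdx_sublist R.reverse j).reverse
    simpa using h2
  · show ℓ (π (R.reverse.eraseIdx j).reverse) = (R.reverse.eraseIdx j).reverse.length
    rw [e1]
    have hA : ℓ (σ i * π R) + 1 = ℓ (π R) := by
      rcases cs.length_simple_mul (π R) i with h' | h'
      · omega
      · exact h'
    have hlen : (R.reverse.eraseIdx j).reverse.length = R.length - 1 := by
      rw [List.length_reverse, List.length_eraseIdx]
      have hj' : j < R.length := by simpa using hj
      simp [hj']
    have hl2 : ℓ (π R) = R.length := hred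
    omega

/-- Deletion property: every word contains a reduced sublist with the same product. -/
lemma exists_reduced_sublist (ω : List B) :
    ∃ R, R <+ ω ∧ cs.IsReduced R ∧ π R = π ω := by
  induction ω with
  | nil => exact ⟨[], List.Sublist.refl [], by simp [CoxeterSystem.IsReduced], rfl⟩
  | cons i ξ ih =>
    obtain ⟨R', hsub, hred, hprod⟩ := ih
    rcases cs.length_simple_mul (π R') i with hup | hdown
    · refine ⟨i :: R', List.Sublist.cons₂ i hsub, ?_, ?_⟩
      · show ℓ (π (i :: R')) = (i :: R').length
        rw [cs.wordProd_cons, hup]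
        rw [List.length_cons]
        rw [hred]
      · rw [cs.wordProd_cons, cs.wordProd_cons, hprod]
    · have hlt : ℓ (σ i * π R') < ℓ (π R') := by omega
      obtain ⟨R'', h1, h2, h3⟩ := left_exchange' cs hred hlt
      refine ⟨R'', h1.trans (hsub.trans (List.sublist_cons_self i ξ)), h2, ?_⟩
      rw [h3, hprod, cs.wordProd_cons]

/-- One step in the Bruhat order: `u = w * t` for a reflection `t`, with smaller length. -/
def bstep (u w : W) : Prop := ∃ t, cs.IsReflection t ∧ u = w * t ∧ ℓ u < ℓ w

/-- Bruhat order (defined via chains of reflections). -/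
def ble (u w : W) : Prop := Relation.ReflTransGen (bstep cs) u w

lemma ble_length {u w : W} (h : ble cs u w) : ℓ u ≤ ℓ w := by
  induction h with
  | refl => exact le_refl _
  | tail _ hstep ih =>
    obtain ⟨t, _, _, hlt⟩ := hstep
    omega

/-- Every reduced word of `w` contains a reduced word of anything Bruhat-below `w`. -/
lemma crw_of_ble {u w : W} (h : ble cs u w) :
    ∀ D, cs.IsReduced D → π D = w → ContainsReducedWord cs D u := by
  induction h with
  | refl =>
    intro D hD hπ
    exact ⟨D, List.Sublist.refl D, by rw [← hπ, hD], hπ⟩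
  | tail hby hstep ih =>
    intro D hD hπ
    obtain ⟨t, ht, hbc, hlt⟩ := hstep
    have hlt' : ℓ (π D * t) < ℓ (π D) := by rw [hπ, ← hbc]; exact hlt
    obtain ⟨j, hj, hprod⟩ := strong_exchange cs ht hlt'
    obtain ⟨F, hFsub, hFred, hFprod⟩ := exists_reduced_sublist cs (D.eraseIdx j)
    have hFb : π F = _ := hFprod
    obtain ⟨R, hR1, hR2, hR3⟩ := ih F hFred (by rw [hFprod, hprod, hπ, ← hbc])
    exact ⟨R, hR1.trans (hFsub.trans (List.eraseIdx_sublist D j)), hR2, hR3⟩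

lemma ble_simple_mul_one_step {v w : W} (i : B) (hstep : bstep cs v w) :
    ble cs (σ i * v) (σ i * w) ∨ ble cs (σ i * v) w := by
  obtain ⟨t, ht, rfl, hlt⟩ := hstep
  rcases lt_trichotomy (ℓ (σ i * (w * t))) (ℓ (w * t)) with hd | heq | hu
  · right
    have hrefl : cs.IsReflection ((w * t)⁻¹ * σ i * (w * t)) := by
      have := (cs.isReflection_simple i).conj (w * t)⁻¹
      simpa using this
    have s1 : bstep cs (σ i * (w * t)) (w * t) :=
      ⟨(w * t)⁻¹ * σ i * (w * t), hrefl, by group, hd⟩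
    exact Relation.ReflTransGen.tail (Relation.ReflTransGen.single s1) ⟨t, ht, rfl, hlt⟩
  · exact absurd heq (cs.length_simple_mul_ne (w * t) i)
  · rcases lt_trichotomy (ℓ (σ i * (w * t))) (ℓ (σ i * w)) with h1 | h2 | h3
    · left
      exact Relation.ReflTransGen.single ⟨t, ht, (mul_assoc _ _ _).symm, h1⟩
    · exfalso
      have hne := ht.length_mul_left_ne (σ i * w)
      rw [← mul_assoc] at h2
      exact hne h2
    · right
      have hsgnw : sgn cs w t = -1 := (sgn_neg_one_iff cs ht).mpr hlt
      have hsgnsw : sgn cs (σ i * w) t = 1 := by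
        rcases Int.units_eq_one_or (sgn cs (σ i * w) t) with h' | h'
        · exact h'
        · exfalso
          have hlt2 := (sgn_neg_one_iff cs ht).mp h'
          rw [mul_assoc] at hlt2
          omega
      have key := sgn_mul cs (σ i) (σ i * w) t
      rw [cs.simple_mul_simple_cancel_left, hsgnw, hsgnsw, one_mul] at key
      rw [sgn_simple] at key
      have harg : σ i * w * t * (σ i * w)⁻¹ = σ i := by
        by_contra hne
        rw [if_neg hne] at key
        exact absurd key.symm (by decide)
      rw [mul_inv_eq_iff_eq_mul] at harg
      rw [cs.simple_mul_simple_cancel_left] at harg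
      have hvw : σ i * (w * t) = w := by rw [← mul_assoc]; exact harg
      rw [hvw]
      exact Relation.ReflTransGen.refl

lemma ble_simple_mul {u w : W} (i : B) (h : ble cs u w) :
    ble cs (σ i * u) (σ i * w) ∨ ble cs (σ i * u) w := by
  induction h with
  | refl => exact Or.inl Relation.ReflTransGen.refl
  | tail hb hstep ih =>
    rcases ih with h1 | h1
    · rcases ble_simple_mul_one_step cs i hstep with h2 | h2
      · exact Or.inl (h1.trans h2)
      · exact Or.inr (h1.trans h2)
    · exact Or.inr (Relation.ReflTransGen.tail h1 hstep)

lemma ble_inv {u w : W} (h : ble cs u w) : ble cs u⁻¹ w⁻¹ := by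
  induction h with
  | refl => exact Relation.ReflTransGen.refl
  | @tail b c hb hstep ih =>
    obtain ⟨t, ht, hbc, hlt⟩ := hstep
    refine Relation.ReflTransGen.tail ih ⟨c * t * c⁻¹, ht.conj c, ?_, ?_⟩
    · rw [hbc, mul_inv_rev, ht.inv]; group
    · rw [cs.length_inv, cs.length_inv]; exact hlt

lemma ble_mul_simple {u w : W} (i : B) (h : ble cs u w) :
    ble cs (u * σ i) (w * σ i) ∨ ble cs (u * σ i) w := by
  rcases ble_simple_mul cs i (ble_inv cs h) with h1 | h1
  · left
    have h2 := ble_inv cs h1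
    simpa [mul_inv_rev, cs.inv_simple] using h2
  · right
    have h2 := ble_inv cs h1
    simpa [mul_inv_rev, cs.inv_simple] using h2

/-- The subword property: a reduced subword of a reduced word gives Bruhat comparability. -/
lemma ble_of_crw : ∀ D : List B, cs.IsReduced D → ∀ {ρ : W},
    ContainsReducedWord cs D ρ → ble cs ρ (π D) := by
  intro D
  induction D with
  | nil =>
    rintro _ ρ ⟨R, hsub, hlen, hprod⟩
    rw [List.sublist_nil.mp hsub] at hprod
    rw [← hprod]
    exact Relation.ReflTransGen.refl
  | cons i E ih =>
    rintro hred ρ ⟨R, hsub, hlen, hprod⟩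
    have hEred : cs.IsReduced E := by
      have := hred.drop 1
      simpa using this
    have hlenD : ℓ (π (i :: E)) = E.length + 1 := by
      rw [hred]; simp
    have hstep : bstep cs (π E) (π (i :: E)) := by
      refine ⟨(π (i :: E))⁻¹ * σ i * (π (i :: E)), ?_, ?_, ?_⟩
      · have := (cs.isReflection_simple i).conj (π (i :: E))⁻¹
        simpa using this
      · rw [cs.wordProd_cons]
        simp [mul_assoc, cs.simple_mul_simple_cancel_left]
      · rw [hlenD, hEred]
        omega
    cases hsub with
    | cons _ h =>
      exact Relation.ReflTransGen.tail (ih hEred ⟨R, h, hlen, hprod⟩) hstep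
    | cons_cons _ h =>
      rename_i R'
      -- R = i :: R', h : R' <+ E
      rw [cs.wordProd_cons] at hprod
      have hlR' : ℓ (π R') = R'.length := by
        have h1 : ℓ (π R') ≤ R'.length := cs.length_wordProd_le R'
        have h2 : ℓ ρ ≤ ℓ (π R') + 1 := by
          rw [← hprod]
          rcases cs.length_simple_mul (π R') i with h' | h' <;> omega
        rw [← hlen] at h2
        simp at h2 ⊢
        omega
      have ible : ble cs (π R') (π E) := ih hEred ⟨R', h, hlR'.symm, rfl⟩
      rcases ble_simple_mul cs i ible with h1 | h1
      · rw [← hprod, cs.wordProd_cons]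
        exact h1
      · rw [← hprod]
        exact Relation.ReflTransGen.tail h1 hstep

lemma crw_concat_iff (Q : List B) (i : B) (ρ : W) :
    ContainsReducedWord cs (Q ++ [i]) ρ ↔
      ContainsReducedWord cs Q ρ ∨
        (ℓ (ρ * σ i) < ℓ ρ ∧ ContainsReducedWord cs Q (ρ * σ i)) := by
  constructor
  · rintro ⟨R, hsub, hlen, hprod⟩
    rw [List.sublist_append_iff] at hsub
    obtain ⟨R₁, R₂, rfl, h1, h2⟩ := hsub
    rcases List.sublist_singleton.mp h2 with rfl | rfl
    · left
      exact ⟨R₁, h1, by simpa using hlen, by simpa using hprod⟩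
    · right
      rw [cs.wordProd_append, cs.wordProd_singleton] at hprod
      have hprod' : π R₁ = ρ * σ i := by
        rw [← hprod, mul_assoc, cs.simple_mul_simple_self, mul_one]
      have hlen1 : R₁.length + 1 = ℓ ρ := by simpa using hlen
      have hle : ℓ (ρ * σ i) ≤ R₁.length := hprod' ▸ cs.length_wordProd_le R₁
      have hgt : ℓ ρ ≤ ℓ (ρ * σ i) + 1 := by
        rcases cs.length_mul_simple ρ i with h | h <;> omega
      exact ⟨by omega, ⟨R₁, h1, by omega, hprod'⟩⟩
  · rintro (⟨R, hsub, hlen, hprod⟩ | ⟨hdesc, R, hsub, hlen, hprod⟩)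
    · exact ⟨R, hsub.trans (List.sublist_append_left Q [i]), hlen, hprod⟩
    · refine ⟨R ++ [i], hsub.append (List.Sublist.refl [i]), ?_, ?_⟩
      · have h1 : ℓ (ρ * σ i) + 1 = ℓ ρ := by
          rcases cs.length_mul_simple ρ i with h | h <;> omega
        simp only [List.length_append, List.length_singleton]
        omega
      · rw [cs.wordProd_append, cs.wordProd_singleton, hprod, mul_assoc,
          cs.simple_mul_simple_self, mul_one]

lemma isReduced_concat_of_ascent {E : List B} {i : B} (hEred : cs.IsReduced E)
    (hasc : ℓ (π E) < ℓ (π E * σ i)) : cs.IsReduced (E ++ [i]) := by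
  show ℓ (π (E ++ [i])) = (E ++ [i]).length
  rw [cs.wordProd_append, cs.wordProd_singleton]
  have h1 : ℓ (π E * σ i) = ℓ (π E) + 1 := by
    rcases cs.length_mul_simple (π E) i with h | h <;> omega
  simp only [List.length_append, List.length_singleton]
  rw [h1, hEred]

lemma crw_iff_ble (Q : List B) : ∀ ρ : W,
    ContainsReducedWord cs Q ρ ↔ ble cs ρ (demazure cs Q) := by
  induction Q using List.reverseRecOn with
  | nil =>
    intro ρ
    constructor
    · rintro ⟨R, hsub, hlen, hprod⟩
      rw [List.sublist_nil.mp hsub] at hprod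
      have : ρ = 1 := by rw [← hprod, cs.wordProd_nil]
      rw [this]
      exact Relation.ReflTransGen.refl
    · intro h
      have h0 : ℓ ρ ≤ ℓ (demazure cs []) := ble_length cs h
      have h1 : demazure cs [] = 1 := rfl
      rw [h1, cs.length_one] at h0
      have h2 : ρ = 1 := cs.length_eq_zero_iff.mp (by omega)
      exact ⟨[], List.Sublist.refl [], by simp [h2], by simp [h2]⟩
  | append_singleton Q i ih =>
    intro ρ
    have hdem : demazure cs (Q ++ [i]) = demazureStep cs (demazure cs Q) i := by
      simp [demazure, List.foldl_append]
    have hsq : ∀ x : W, x * σ i * σ i = x := fun x => by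
      rw [mul_assoc, cs.simple_mul_simple_self, mul_one]
    rw [crw_concat_iff, ih ρ, ih (ρ * σ i), hdem]
    set w := demazure cs Q with hw
    unfold demazureStep
    split_ifs with hasc
    · -- ascent case : demazure step is w * σ i
      have hstep : bstep cs w (w * σ i) :=
        ⟨σ i, cs.isReflection_simple i, (hsq w).symm, hasc⟩
      constructor
      · rintro (h | ⟨hd, h⟩)
        · exact Relation.ReflTransGen.tail h hstep
        · rcases ble_mul_simple cs i h with h1 | h1
          · rw [hsq] at h1
            exact h1
          · rw [hsq] at h1
            exact Relation.ReflTransGen.tail h1 hstep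
      · intro h
        obtain ⟨E, hEred, hEw⟩ := cs.exists_reduced_word' w
        have hD : cs.IsReduced (E ++ [i]) :=
          isReduced_concat_of_ascent cs hEred (by rw [← hEw]; exact hasc)
        have hprodD : π (E ++ [i]) = w * σ i := by
          rw [cs.wordProd_append, cs.wordProd_singleton, ← hEw]
        have hcrw := crw_of_ble cs h (E ++ [i]) hD hprodD
        rcases (crw_concat_iff cs E i ρ).mp hcrw with h1 | ⟨hd, h1⟩
        · left
          have := ble_of_crw cs E hEred h1
          rwa [← hEw] at this
        · right
          refine ⟨hd, ?_⟩
          have := ble_of_crw cs E hEred h1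
          rwa [← hEw] at this
    · -- descent case : demazure step is w
      have hdesc : ℓ (w * σ i) < ℓ w := by
        have := cs.length_mul_simple_ne w i
        omega
      constructor
      · rintro (h | ⟨hd, h⟩)
        · exact h
        · -- lifting
          obtain ⟨E, hEred, hEw⟩ := cs.exists_reduced_word' (w * σ i)
          have hasc2 : ℓ (π E) < ℓ (π E * σ i) := by
            rw [← hEw, hsq]
            exact hdesc
          have hD : cs.IsReduced (E ++ [i]) := isReduced_concat_of_ascent cs hEred hasc2
          have hprodD : π (E ++ [i]) = w := by
            rw [cs.wordProd_append, cs.wordProd_singleton, ← hEw, hsq]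
          have hcrw := crw_of_ble cs h (E ++ [i]) hD hprodD
          rcases (crw_concat_iff cs E i (ρ * σ i)).mp hcrw with h1 | ⟨hd2, h1⟩
          · -- append the letter i back
            obtain ⟨R, hRsub, hRlen, hRprod⟩ := h1
            have hcrwρ : ContainsReducedWord cs (E ++ [i]) ρ := by
              refine ⟨R ++ [i], hRsub.append (List.Sublist.refl [i]), ?_, ?_⟩
              · have h2 : ℓ (ρ * σ i) + 1 = ℓ ρ := by
                  rcases cs.length_mul_simple ρ i with h' | h' <;> omega
                simp only [List.length_append, List.length_singleton]
                omega
              · rw [cs.wordProd_append, cs.wordProd_singleton, hRprod, hsq]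
            have := ble_of_crw cs (E ++ [i]) hD hcrwρ
            rwa [hprodD] at this
          · exfalso
            rw [hsq] at hd2
            omega
      · intro h
        exact Or.inl h

/-- `Q` contains a reduced expression of `ρ` as a subword iff some reduced word for
the Demazure product `δ(Q)` contains a reduced expression of `ρ` as a subword. -/
theorem containsReduced_iff_demazure_containsReduced [Finite W]
    (cs : CoxeterSystem M W) (Q : List B) (ρ : W) :
    ContainsReducedWord cs Q ρ ↔
      ∃ D : List B, D.length = cs.length (demazure cs Q) ∧
        cs.wordProd D = demazure cs Q ∧ ContainsReducedWord cs D ρ := by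
  constructor
  · intro h
    have hble := (crw_iff_ble cs Q ρ).mp h
    obtain ⟨D, hDred, hDw⟩ := cs.exists_reduced_word' (demazure cs Q)
    refine ⟨D, ?_, hDw.symm, crw_of_ble cs hble D hDred hDw.symm⟩
    rw [hDw]
    exact hDred.symm
  · rintro ⟨D, hlen, hprod, hcrw⟩
    have hDred : cs.IsReduced D := by
      show cs.length (cs.wordProd D) = D.length
      rw [hprod, hlen]
    have hble := ble_of_crw cs D hDred hcrw
    rw [hprod] at hble
    exact (crw_iff_ble cs Q ρ).mpr hble

end SubwordComplexNil
end

section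
/- (Word Property) Let (W,S) be a finite Coxeter system and let w ∈ W. Any word in the simple reflections S whose letters multiply to w can be transformed into a reduced word for w by a finite sequence of nil-moves (deleting two consecutive identical letters s s) and braid moves (replacing a consecutive alternating subword s_i s_j s_i s_j … of length m_{ij} by s_j s_i s_j s_i … of the same length, where m_{ij} is the order of s_i s_j in W). -/
namespace SubwordComplexNil

variable {B W : Type*} [Group W] {M : CoxeterMatrix B}

section Aux

open CoxeterSystem List

variable (cs : CoxeterSystem M W)

local prefix:100 "s" => cs.simple
local prefix:100 "π" => cs.wordProd
local prefix:100 "ℓ" => cs.length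

noncomputable local instance inst_s13 : DecidableEq W := Classical.decEq W

/-! ### Dihedral algebra -/

private lemma sj_mul_pow (i j : B) (k : ℕ) :
    ((s i * s j) ^ k)⁻¹ * s j = s j * (s i * s j) ^ k := by
  have h1 : s j * (s i * s j) * (s j)⁻¹ = (s i * s j)⁻¹ := by
    rw [cs.inv_simple, mul_inv_rev, cs.inv_simple, cs.inv_simple]
    rw [show s j * (s i * s j) * s j = s j * s i * (s j * s j) by group,
      cs.simple_mul_simple_self, mul_one]
  have h2 : s j * (s i * s j) ^ k * (s j)⁻¹ = ((s i * s j) ^ k)⁻¹ := by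
    rw [← inv_pow, ← conj_pow, h1]
  rw [← h2, cs.inv_simple]
  rw [show s j * (s i * s j) ^ k * s j * s j = s j * (s i * s j) ^ k * (s j * s j) by group,
    cs.simple_mul_simple_self, mul_one]

private lemma sj_si_eq_inv (i j : B) : s j * s i = (s i * s j)⁻¹ := by
  rw [mul_inv_rev, cs.inv_simple, cs.inv_simple]

/-- Closed form for the factors in the inversion sequence of an alternating word. -/
private lemma r_formula (i j : B) (p : ℕ) :
    (π (alternatingWord i j p))⁻¹ * π (alternatingWord i j (p + 1))
      = s j * (s i * s j) ^ p := by
  rcases Nat.even_or_odd p with ⟨k, rfl⟩ | ⟨k, rfl⟩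
  · have hev : Even (k + k) := ⟨k, rfl⟩
    have hodd : ¬ Even (k + k + 1) := by rintro ⟨r, hr⟩; omega
    rw [cs.prod_alternatingWord_eq_mul_pow, cs.prod_alternatingWord_eq_mul_pow]
    rw [if_pos hev, if_neg hodd]
    rw [show (k + k) / 2 = k by omega, show (k + k + 1) / 2 = k by omega]
    rw [one_mul, ← mul_assoc, sj_mul_pow cs i j k, mul_assoc, ← pow_add]
  · have hodd : ¬ Even (2 * k + 1) := by rintro ⟨r, hr⟩; omega
    have hev : Even (2 * k + 1 + 1) := ⟨k + 1, by omega⟩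
    rw [cs.prod_alternatingWord_eq_mul_pow, cs.prod_alternatingWord_eq_mul_pow]
    rw [if_neg hodd, if_pos hev]
    rw [show (2 * k + 1) / 2 = k by omega, show (2 * k + 1 + 1) / 2 = k + 1 by omega]
    rw [one_mul, mul_inv_rev, cs.inv_simple]
    calc ((s i * s j) ^ k)⁻¹ * s j * (s i * s j) ^ (k + 1)
        = ((s i * s j) ^ k)⁻¹ * s j * (s i * s j) ^ k * (s i * s j) := by
          rw [pow_succ, ← mul_assoc]
      _ = s j * (s i * s j) ^ k * (s i * s j) ^ k * (s i * s j) := by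
          rw [sj_mul_pow cs i j k]
      _ = s j * (s i * s j) ^ (2 * k + 1) := by
          rw [mul_assoc (s j), ← pow_add, mul_assoc (s j), ← pow_succ]
          congr 2
          omega

/-- If the two alternating words of length `p` have equal products, then
`(s i * s j) ^ p = 1`. -/
private lemma pow_eq_one_of_prod_alt_eq (i j : B) (p : ℕ)
    (h : π (alternatingWord i j p) = π (alternatingWord j i p)) :
    (s i * s j) ^ p = 1 := by
  rw [cs.prod_alternatingWord_eq_mul_pow, cs.prod_alternatingWord_eq_mul_pow] at h
  rcases Nat.even_or_odd p with ⟨k, rfl⟩ | ⟨k, rfl⟩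
  · have hev : Even (k + k) := ⟨k, rfl⟩
    rw [if_pos hev, if_pos hev, one_mul, one_mul,
      show (k + k) / 2 = k by omega, sj_si_eq_inv cs i j, inv_pow] at h
    rw [pow_add]
    nth_rewrite 1 [h]
    exact inv_mul_cancel _
  · have hodd : ¬ Even (2 * k + 1) := by rintro ⟨r, hr⟩; omega
    rw [if_neg hodd, if_neg hodd,
      show (2 * k + 1) / 2 = k by omega, sj_si_eq_inv cs i j, inv_pow] at h
    -- h : s j * c ^ k = s i * (c ^ k)⁻¹
    have e1 : (s i * s j) ^ (2 * k + 1)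
        = (s i * s j) ^ k * (s i * (s j * (s i * s j) ^ k)) := by
      rw [show 2 * k + 1 = k + (k + 1) by omega, pow_add, pow_succ']
      group
    rw [e1, h, show (s i * s j) ^ k * (s i * (s i * ((s i * s j) ^ k)⁻¹))
        = (s i * s j) ^ k * (s i * s i) * ((s i * s j) ^ k)⁻¹ by group,
      cs.simple_mul_simple_self, mul_one, mul_inv_cancel]

/-- Conversely, if `(s i * s j) ^ p = 1` then the two alternating words of length `p`
have equal products. -/
private lemma prod_alt_eq_of_pow_eq_one (i j : B) (p : ℕ)
    (h : (s i * s j) ^ p = 1) :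
    π (alternatingWord i j p) = π (alternatingWord j i p) := by
  rw [cs.prod_alternatingWord_eq_mul_pow, cs.prod_alternatingWord_eq_mul_pow]
  rcases Nat.even_or_odd p with ⟨k, rfl⟩ | ⟨k, rfl⟩
  · have hev : Even (k + k) := ⟨k, rfl⟩
    rw [if_pos hev, if_pos hev, one_mul, one_mul, show (k + k) / 2 = k by omega,
      sj_si_eq_inv cs i j, inv_pow, eq_comm, inv_eq_iff_mul_eq_one, ← pow_add]
    exact h
  · have hodd : ¬ Even (2 * k + 1) := by rintro ⟨r, hr⟩; omega
    rw [if_neg hodd, if_neg hodd,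
      show (2 * k + 1) / 2 = k by omega, sj_si_eq_inv cs i j, inv_pow]
    have h2 : s i * (s j * (s i * s j) ^ k) * (s i * s j) ^ k = 1 := by
      calc s i * (s j * (s i * s j) ^ k) * (s i * s j) ^ k
          = (s i * s j) ^ (k + 1) * (s i * s j) ^ k := by rw [pow_succ']; group
        _ = (s i * s j) ^ (2 * k + 1) := by rw [← pow_add]; congr 1; omega
        _ = 1 := h
    have h3 : s i * (s j * (s i * s j) ^ k) = (((s i * s j) ^ k))⁻¹ := by
      rwa [mul_eq_one_iff_eq_inv] at h2
    apply mul_left_cancel (a := s i)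
    rw [h3, ← mul_assoc, cs.simple_mul_simple_self, one_mul]


/-! ### Alternating word combinatorics -/

private lemma alt_drop (i j : B) : ∀ (n p : ℕ),
    (alternatingWord i j n).drop p = alternatingWord i j (n - p) := by
  intro n
  induction n with
  | zero => intro p; simp [alternatingWord]
  | succ n ih =>
    intro p
    cases p with
    | zero => simp
    | succ q =>
      rw [alternatingWord_succ' i j n, List.drop_succ_cons, ih q]
      congr 1
      omega

private lemma alt_mem (i j : B) : ∀ (n : ℕ) (a : B), a ∈ alternatingWord i j n →
    a = i ∨ a = j := by
  intro n
  induction n with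
  | zero => intro a ha; simp [alternatingWord] at ha
  | succ n ih =>
    intro a ha
    rw [alternatingWord_succ'] at ha
    rcases List.mem_cons.mp ha with h | h
    · by_cases hn : Even n
      · rw [if_pos hn] at h; right; exact h
      · rw [if_neg hn] at h; left; exact h
    · exact ih a h

private lemma not_isReduced_cons_cons (a : B) (rest : List B) :
    ¬ cs.IsReduced (a :: a :: rest) := by
  intro h
  unfold CoxeterSystem.IsReduced at h
  rw [cs.wordProd_cons, cs.wordProd_cons, cs.simple_mul_simple_cancel_left] at h
  have := cs.length_wordProd_le rest
  simp only [List.length_cons] at h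
  omega

/-- A reduced word over a two-letter alphabet is alternating. -/
private lemma two_letter_alt {x y : B} (hxy : x ≠ y) : ∀ (ω : List B),
    cs.IsReduced ω → (∀ a ∈ ω, a = x ∨ a = y) →
    ω = alternatingWord x y ω.length ∨ ω = alternatingWord y x ω.length := by
  intro ω
  induction ω with
  | nil => intro _ _; left; rfl
  | cons a ω ih =>
    intro hred hmem
    have hredω : cs.IsReduced ω := by
      have := hred.drop 1
      simpa using this
    have hmemω : ∀ b ∈ ω, b = x ∨ b = y := fun b hb => hmem b (List.mem_cons_of_mem a hb)
    have ha : a = x ∨ a = y := hmem a List.mem_cons_self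
    -- a is not equal to the head of ω
    have hne : ∀ c rest, ω = c :: rest → a ≠ c := by
      rintro c rest rfl rfl
      exact not_isReduced_cons_cons cs a rest hred
    rcases ih hredω hmemω with hω | hω
    · -- ω = alternatingWord x y ω.length
      cases hω' : ω.length with
      | zero =>
        have : ω = [] := List.length_eq_zero_iff.mp hω'
        subst this
        rcases ha with rfl | rfl
        · right
          rw [show (([a] : List B)).length = 1 from rfl]
          rw [alternatingWord_succ]
          rfl
        · left
          rw [show (([a] : List B)).length = 1 from rfl]
          rw [alternatingWord_succ]
          rfl
      | succ q =>
        rw [hω'] at hω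
        have hωexp := hω
        rw [alternatingWord_succ'] at hωexp
        have hac : a ≠ (if Even q then y else x) := hne _ _ hωexp
        have haval : a = (if Even (q+1) then y else x) := by
          by_cases hq : Even q
          · rw [if_pos hq] at hac
            rw [if_neg (by rw [Nat.even_add_one]; exact not_not_intro hq)]
            rcases ha with rfl | rfl
            · rfl
            · exact absurd rfl hac
          · rw [if_neg hq] at hac
            rw [if_pos (Nat.even_add_one.mpr hq)]
            rcases ha with rfl | rfl
            · exact absurd rfl hac
            · rfl
        left
        rw [List.length_cons, hω']
        rw [alternatingWord_succ' x y (q+1), ← haval, ← hω]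
    · -- symmetric case : ω = alternatingWord y x ω.length
      cases hω' : ω.length with
      | zero =>
        have : ω = [] := List.length_eq_zero_iff.mp hω'
        subst this
        rcases ha with rfl | rfl
        · right
          rw [show (([a] : List B)).length = 1 from rfl]
          rw [alternatingWord_succ]
          rfl
        · left
          rw [show (([a] : List B)).length = 1 from rfl]
          rw [alternatingWord_succ]
          rfl
      | succ q =>
        rw [hω'] at hω
        have hωexp := hω
        rw [alternatingWord_succ'] at hωexp
        have hac : a ≠ (if Even q then x else y) := hne _ _ hωexp
        have haval : a = (if Even (q+1) then x else y) := by
          by_cases hq : Even q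
          · rw [if_pos hq] at hac
            rw [if_neg (by rw [Nat.even_add_one]; exact not_not_intro hq)]
            rcases ha with rfl | rfl
            · exact absurd rfl hac
            · rfl
          · rw [if_neg hq] at hac
            rw [if_pos (Nat.even_add_one.mpr hq)]
            rcases ha with rfl | rfl
            · rfl
            · exact absurd rfl hac
        right
        rw [List.length_cons, hω']
        rw [alternatingWord_succ' y x (q+1), ← haval, ← hω]

private lemma eraseIdx_append_left : ∀ (l₁ l₂ : List B) (k : ℕ), k < l₁.length →
    (l₁ ++ l₂).eraseIdx k = l₁.eraseIdx k ++ l₂ := by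
  intro l₁
  induction l₁ with
  | nil => intro l₂ k hk; simp at hk
  | cons a l₁ ih =>
    intro l₂ k hk
    cases k with
    | zero => simp [List.eraseIdx]
    | succ q =>
      rw [List.cons_append, List.eraseIdx_cons_succ, ih l₂ q (by simpa using hk)]
      simp

private lemma eraseIdx_append_right : ∀ (l₁ l₂ : List B) (k : ℕ), l₁.length ≤ k →
    (l₁ ++ l₂).eraseIdx k = l₁ ++ l₂.eraseIdx (k - l₁.length) := by
  intro l₁
  induction l₁ with
  | nil => intro l₂ k _; simp
  | cons a l₁ ih =>
    intro l₂ k hk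
    cases k with
    | zero => simp at hk
    | succ q =>
      rw [List.cons_append, List.eraseIdx_cons_succ, ih l₂ q (by simpa using hk)]
      rw [show q + 1 - (a :: l₁).length = q - l₁.length by simp]
      simp


/-! ### The permutation representation on `W × ZMod 2` and the exchange condition -/

private noncomputable def etaFun (i : B) : W × ZMod 2 → W × ZMod 2 :=
  fun p => (s i * p.1 * s i, p.2 + if p.1 = s i then 1 else 0)

private lemma etaFun_involutive (i : B) : Function.Involutive (etaFun cs i) := by
  rintro ⟨t, ε⟩
  simp only [etaFun]
  have h1 : s i * (s i * t * s i) * s i = t := by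
    rw [show s i * (s i * t * s i) * s i = (s i * s i) * t * (s i * s i) by group,
      cs.simple_mul_simple_self, one_mul, mul_one]
  have h2 : (s i * t * s i = s i) ↔ (t = s i) := by
    constructor
    · intro h
      have := congrArg (fun z => s i * z * s i) h
      simpa only [h1, cs.simple_mul_simple_cancel_left,
        cs.simple_mul_simple_cancel_right] using this
    · rintro rfl
      rw [cs.simple_mul_simple_self, one_mul]
  rw [h1]
  refine Prod.ext rfl ?_
  simp only
  simp only [h2]
  by_cases ht : t = s i
  · simp only [if_pos ht]
    rw [add_assoc, show (1 : ZMod 2) + 1 = 0 by decide, add_zero]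
  · simp only [if_neg ht]
    rw [add_zero, add_zero]

private noncomputable def eta (i : B) : Equiv.Perm (W × ZMod 2) :=
  (etaFun_involutive cs i).toPerm

private lemma eta_apply (i : B) (t : W) (ε : ZMod 2) :
    eta cs i (t, ε) = (s i * t * s i, ε + if t = s i then 1 else 0) := rfl

private lemma ris_cons (i : B) (ω : List B) :
    cs.rightInvSeq (i :: ω) = ((π ω)⁻¹ * s i * π ω) :: cs.rightInvSeq ω := rfl

private lemma eta_prod (ω : List B) (t : W) (ε : ZMod 2) :
    (ω.map (eta cs)).prod (t, ε)
      = (π ω * t * (π ω)⁻¹, ε + (((cs.rightInvSeq ω).count t : ℕ) : ZMod 2)) := by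
  induction ω generalizing ε with
  | nil => simp
  | cons i ω ih =>
    rw [List.map_cons, List.prod_cons, Equiv.Perm.mul_apply, ih, eta_apply, ris_cons cs i ω,
      List.count_cons]
    have hiff : ((π ω)⁻¹ * s i * π ω = t) ↔ (π ω * t * (π ω)⁻¹ = s i) := by
      constructor
      · rintro rfl; group
      · intro h; rw [← h]; group
    refine Prod.ext ?_ ?_
    · show s i * (π ω * t * (π ω)⁻¹) * s i = π (i :: ω) * t * (π (i :: ω))⁻¹
      rw [cs.wordProd_cons, mul_inv_rev, cs.inv_simple]
      group
    · dsimp only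
      simp only [beq_iff_eq]
      push_cast [apply_ite (Nat.cast : ℕ → ZMod 2)]
      rw [if_congr hiff rfl rfl]
      ring

private lemma alt_two_succ (i j : B) (k : ℕ) :
    alternatingWord i j (2 * (k + 1)) = i :: j :: alternatingWord i j (2 * k) := by
  have hodd : ¬ Even (2 * k + 1) := by rintro ⟨r, hr⟩; omega
  have hev : Even (2 * k) := ⟨k, by omega⟩
  have h1 : 2 * (k + 1) = (2 * k + 1) + 1 := by omega
  rw [h1, alternatingWord_succ', alternatingWord_succ', if_neg hodd, if_pos hev]

private lemma eta_alt_pow (i j : B) (k : ℕ) :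
    ((alternatingWord i j (2 * k)).map (eta cs)).prod = (eta cs i * eta cs j) ^ k := by
  induction k with
  | zero => simp [show alternatingWord i j 0 = [] from rfl]
  | succ k ih =>
    rw [alt_two_succ, List.map_cons, List.map_cons, List.prod_cons, List.prod_cons, ih,
      pow_succ']
    rw [mul_assoc]

private lemma getD_ris_alt (i j : B) (n k : ℕ) (hk : k < n) :
    (cs.rightInvSeq (alternatingWord i j n)).getD k 1
      = s j * (s i * s j) ^ (n - (k + 1)) := by
  have hlen : k < (alternatingWord i j n).length := by
    rw [length_alternatingWord]; exact hk
  have hdropk : (alternatingWord i j n).drop k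
      = (alternatingWord i j n)[k] :: (alternatingWord i j n).drop (k + 1) :=
    List.drop_eq_getElem_cons hlen
  have e : π (alternatingWord i j (n - k))
      = s ((alternatingWord i j n)[k]) * π (alternatingWord i j (n - (k + 1))) := by
    rw [← alt_drop i j n k, ← alt_drop i j n (k + 1), hdropk, cs.wordProd_cons]
  have main : (π (alternatingWord i j (n - (k + 1))))⁻¹ * π (alternatingWord i j (n - k))
      = s j * (s i * s j) ^ (n - (k + 1)) := by
    have h := r_formula cs i j (n - (k + 1))
    rwa [show n - (k + 1) + 1 = n - k by omega] at h
  rw [cs.getD_rightInvSeq, alt_drop i j n (k + 1)]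
  rw [List.getElem?_eq_getElem hlen]
  show (π (alternatingWord i j (n - (k+1))))⁻¹ * s ((alternatingWord i j n)[k])
      * π (alternatingWord i j (n - (k+1))) = _
  rw [mul_assoc, ← e, main]

private lemma ris_alt_double (i j : B) (m : ℕ) (hm : (s i * s j) ^ m = 1) :
    cs.rightInvSeq (alternatingWord i j (2 * m))
      = cs.rightInvSeq (alternatingWord i j m) ++ cs.rightInvSeq (alternatingWord i j m) := by
  apply List.ext_getElem
  · simp only [cs.length_rightInvSeq, length_alternatingWord, List.length_append]
    omega
  · intro k h1 h2
    have hk2 : k < 2 * m := by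
      simpa only [cs.length_rightInvSeq, length_alternatingWord] using h1
    have hmlen : (cs.rightInvSeq (alternatingWord i j m)).length = m := by
      rw [cs.length_rightInvSeq, length_alternatingWord]
    rw [← List.getD_eq_getElem _ 1 h1, getD_ris_alt cs i j (2 * m) k hk2]
    by_cases hkm : k < m
    · rw [List.getElem_append_left (by rw [hmlen]; exact hkm)]
      rw [← List.getD_eq_getElem _ 1, getD_ris_alt cs i j m k hkm]
      rw [show 2 * m - (k + 1) = (m - (k + 1)) + m by omega, pow_add, hm, mul_one]
    · push_neg at hkm
      rw [List.getElem_append_right (by rw [hmlen]; exact hkm)]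
      rw [← List.getD_eq_getElem _ 1,
        getD_ris_alt cs i j m (k - (cs.rightInvSeq (alternatingWord i j m)).length)
          (by rw [hmlen]; omega)]
      rw [hmlen]
      rw [show 2 * m - (k + 1) = m - ((k - m) + 1) by omega]

private lemma eta_liftable : CoxeterMatrix.IsLiftable M (eta cs) := by
  intro i j
  apply Equiv.ext
  rintro ⟨t, ε⟩
  rw [← eta_alt_pow cs i j (M i j)]
  rw [eta_prod]
  have hev : Even (2 * M i j) := ⟨M i j, by omega⟩
  have hprod : π (alternatingWord i j (2 * M i j)) = 1 := by
    rw [cs.prod_alternatingWord_eq_mul_pow, if_pos hev,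
      one_mul, show 2 * M i j / 2 = M i j by omega, cs.simple_mul_simple_pow]
  have hcount : (((cs.rightInvSeq (alternatingWord i j (2 * M i j))).count t : ℕ) : ZMod 2)
      = 0 := by
    rw [ris_alt_double cs i j (M i j) (cs.simple_mul_simple_pow i j), List.count_append,
      Nat.cast_add, ← two_mul, show (2 : ZMod 2) = 0 by decide]
    ring
  rw [hprod, hcount, add_zero]
  simp

private noncomputable def phi : W →* Equiv.Perm (W × ZMod 2) :=
  cs.lift ⟨eta cs, eta_liftable cs⟩

private lemma phi_wordProd (ω : List B) : phi cs (π ω) = (ω.map (eta cs)).prod := by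
  induction ω with
  | nil => simp [cs.wordProd_nil]
  | cons i ω ih =>
    rw [cs.wordProd_cons, map_mul, ih, List.map_cons, List.prod_cons]
    congr 1
    exact cs.lift_apply_simple (eta_liftable cs) i

private lemma count_ris_congr {ω ω' : List B} (h : π ω = π ω') (t : W) :
    (((cs.rightInvSeq ω).count t : ℕ) : ZMod 2)
      = (((cs.rightInvSeq ω').count t : ℕ) : ZMod 2) := by
  have h2 : (ω.map (eta cs)).prod = (ω'.map (eta cs)).prod := by
    rw [← phi_wordProd, ← phi_wordProd, h]
  have h3 := congrArg (fun (f : Equiv.Perm (W × ZMod 2)) => (f (t, 0)).2) h2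
  simpa only [eta_prod, zero_add] using h3

/-- Strong exchange (membership form). -/
private lemma simple_mem_rightInvSeq {ω : List B} (hred : cs.IsReduced ω) {i : B}
    (hd : cs.IsRightDescent (π ω) i) : s i ∈ cs.rightInvSeq ω := by
  obtain ⟨τ, hτred, hτ⟩ := cs.exists_reduced_word' (π ω * s i)
  have hπ : π (τ.concat i) = π ω := by
    rw [cs.wordProd_concat, ← hτ, cs.simple_mul_simple_cancel_right]
  have hlen : ℓ (π ω * s i) + 1 = ℓ (π ω) := by
    rcases cs.length_mul_simple (π ω) i with h | h
    · exact absurd hd (by unfold CoxeterSystem.IsRightDescent; omega)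
    · exact h
  have hτlen : τ.length = ℓ (π ω * s i) := by
    unfold CoxeterSystem.IsReduced at hτred
    rw [← hτ] at hτred
    omega
  have hred' : cs.IsReduced (τ.concat i) := by
    unfold CoxeterSystem.IsReduced
    rw [hπ, List.length_concat]
    omega
  have hmem' : s i ∈ cs.rightInvSeq (τ.concat i) := by
    rw [cs.rightInvSeq_concat, List.concat_eq_append]
    exact List.mem_append_right _ (List.mem_singleton_self _)
  have hc1 : (cs.rightInvSeq (τ.concat i)).count (s i) = 1 := by
    have hnd := hred'.nodup_rightInvSeq
    have hle := List.nodup_iff_count_le_one.mp hnd (s i)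
    have hge := List.count_pos_iff.mpr hmem'
    omega
  have hcongr := count_ris_congr cs hπ (s i)
  rw [hc1] at hcongr
  rcases Nat.eq_zero_or_pos ((cs.rightInvSeq ω).count (s i)) with h0 | hpos
  · rw [h0, Nat.cast_zero, Nat.cast_one] at hcongr
    exact absurd hcongr (by decide)
  · exact List.count_pos_iff.mp hpos

/-- Strong exchange property, left version. -/
private lemma exists_eraseIdx_of_isLeftDescent {ω : List B} (hred : cs.IsReduced ω) {i : B}
    (hd : cs.IsLeftDescent (π ω) i) :
    ∃ k < ω.length, s i * π ω = π (ω.eraseIdx k) := by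
  have hmem : s i ∈ cs.leftInvSeq ω := by
    have hredrev : cs.IsReduced ω.reverse := (cs.isReduced_reverse_iff ω).mpr hred
    have hdrev : cs.IsRightDescent (π ω.reverse) i := by
      rw [cs.wordProd_reverse]
      exact cs.isRightDescent_inv_iff.mpr hd
    have := simple_mem_rightInvSeq cs hredrev hdrev
    rw [cs.rightInvSeq_reverse, List.mem_reverse] at this
    exact this
  obtain ⟨k, hk, hEq⟩ := List.mem_iff_getElem.mp hmem
  have hklen : k < ω.length := by
    rw [← cs.length_leftInvSeq ω]; exact hk
  refine ⟨k, hklen, ?_⟩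
  rw [← cs.getD_leftInvSeq_mul_wordProd ω k, List.getD_eq_getElem _ 1 hk, hEq]


/-- If `i` and `j` are both left descents of `w` (with `s i ≠ s j`), then `w` has a reduced
word beginning with the full alternating word of length `m = orderOf (s i * s j)`. -/
private lemma prefix_alternating {w : W} {i j : B} (hs : s i ≠ s j)
    (hi : cs.IsLeftDescent w i) (hj : cs.IsLeftDescent w j)
    (hm : 0 < orderOf (s i * s j)) :
    ∃ V : List B, π (alternatingWord i j (orderOf (s i * s j)) ++ V) = w ∧
      cs.IsReduced (alternatingWord i j (orderOf (s i * s j)) ++ V) := by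
  set m := orderOf (s i * s j) with hmdef
  have main : ∀ p, p ≤ m → ∃ (x y : B) (V : List B),
      ((x = i ∧ y = j) ∨ (x = j ∧ y = i)) ∧
      π (alternatingWord x y p ++ V) = w ∧ cs.IsReduced (alternatingWord x y p ++ V) := by
    intro p
    induction p with
    | zero =>
      intro _
      obtain ⟨V, hVred, hV⟩ := cs.exists_reduced_word' w
      refine ⟨i, j, V, Or.inl ⟨rfl, rfl⟩, ?_, ?_⟩
      · rw [show alternatingWord i j 0 = ([] : List B) from rfl, List.nil_append]
        exact hV.symm
      · rw [show alternatingWord i j 0 = ([] : List B) from rfl, List.nil_append]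
        exact hVred
    | succ p ih =>
      intro hp
      obtain ⟨x, y, V, hxy, hπ, hred⟩ := ih (by omega)
      have hsxy : s x ≠ s y := by
        rcases hxy with ⟨rfl, rfl⟩ | ⟨rfl, rfl⟩
        · exact hs
        · exact hs.symm
      have hxyne : x ≠ y := fun h => hsxy (by rw [h])
      have horder : orderOf (s x * s y) = m := by
        rcases hxy with ⟨rfl, rfl⟩ | ⟨rfl, rfl⟩
        · rfl
        · rw [sj_si_eq_inv cs y x, orderOf_inv]
      have hb : cs.IsLeftDescent w (if Even p then y else x) := by
        rcases hxy with ⟨rfl, rfl⟩ | ⟨rfl, rfl⟩ <;> by_cases hq : Even p <;>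
          simp only [if_pos, if_neg, hq, if_true, if_false] <;> first | exact hi | exact hj
      set b := (if Even p then y else x) with hbdef
      set U := alternatingWord x y p ++ V with hUdef
      have hUlen : U.length = p + V.length := by
        rw [hUdef, List.length_append, length_alternatingWord]
      have hℓw : ℓ w = p + V.length := by
        rw [← hπ]
        unfold CoxeterSystem.IsReduced at hred
        rw [hred, hUlen]
      have hdesc : ℓ (s b * w) + 1 = ℓ w := cs.isLeftDescent_iff.mp hb
      obtain ⟨k, hk, heq⟩ := exists_eraseIdx_of_isLeftDescent cs hred
        (by rw [hπ]; exact hb)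
      rw [hπ] at heq
      -- heq : s b * w = π (U.eraseIdx k)
      have hlenE : (U.eraseIdx k).length + 1 = U.length := List.length_eraseIdx_add_one hk
      have hcons : alternatingWord x y (p + 1) = b :: alternatingWord x y p := by
        rw [alternatingWord_succ']
      by_cases hkp : p ≤ k
      · -- the erased letter is in V
        have hsplit : U.eraseIdx k = alternatingWord x y p ++ V.eraseIdx (k - p) := by
          rw [hUdef, eraseIdx_append_right _ _ k (by rw [length_alternatingWord]; exact hkp),
            length_alternatingWord]
        have hπnew : π (alternatingWord x y (p + 1) ++ V.eraseIdx (k - p)) = w := by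
          rw [hcons, List.cons_append, cs.wordProd_cons, ← hsplit, ← heq,
            cs.simple_mul_simple_cancel_left]
        refine ⟨x, y, V.eraseIdx (k - p), hxy, hπnew, ?_⟩
        unfold CoxeterSystem.IsReduced
        rw [hπnew, List.length_append, length_alternatingWord]
        have hkV : k - p < V.length := by
          rw [hUlen] at hk
          omega
        have := List.length_eraseIdx_add_one hkV
        rw [hUlen] at hlenE
        omega
      · -- the erased letter is in the alternating prefix : contradiction
        exfalso
        push_neg at hkp
        have hkalt : k < (alternatingWord x y p).length := by
          rw [length_alternatingWord]; exact hkp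
        have hsplit : U.eraseIdx k = (alternatingWord x y p).eraseIdx k ++ V := by
          rw [hUdef, eraseIdx_append_left _ _ k hkalt]
        set P₀ := b :: (alternatingWord x y p).eraseIdx k with hP₀def
        have hπnew : π (P₀ ++ V) = w := by
          rw [hP₀def, List.cons_append, cs.wordProd_cons, ← hsplit, ← heq,
            cs.simple_mul_simple_cancel_left]
        have hlenP₀ : P₀.length = p := by
          rw [hP₀def, List.length_cons]
          have := List.length_eraseIdx_add_one hkalt
          rw [length_alternatingWord] at this
          omega
        have hrednew : cs.IsReduced (P₀ ++ V) := by
          unfold CoxeterSystem.IsReduced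
          rw [hπnew, List.length_append, hlenP₀]
          exact hℓw
        have hredP₀ : cs.IsReduced P₀ := by
          have h1 := hrednew.take P₀.length
          rwa [List.take_left] at h1
        have hπP₀ : π P₀ = π (alternatingWord x y p) := by
          have h1 : π P₀ * π V = π (alternatingWord x y p) * π V := by
            rw [← cs.wordProd_append, ← cs.wordProd_append, hπnew, hπ]
          exact mul_right_cancel h1
        have hmemP₀ : ∀ a ∈ P₀, a = x ∨ a = y := by
          intro a ha
          rcases List.mem_cons.mp ha with rfl | ha'
          · by_cases hq : Even p
            · right; rw [hbdef, if_pos hq]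
            · left; rw [hbdef, if_neg hq]
          · exact alt_mem x y p a (List.mem_of_mem_eraseIdx ha')
        have hP₀pos : 0 < p := by omega
        rcases two_letter_alt cs hxyne P₀ hredP₀ hmemP₀ with hP | hP
        · -- heads disagree
          rw [hlenP₀] at hP
          obtain ⟨q, rfl⟩ : ∃ q, p = q + 1 := ⟨p - 1, by omega⟩
          rw [alternatingWord_succ'] at hP
          have hb2 : b = (if Even q then y else x) := (List.cons_eq_cons.mp hP).1
          by_cases hq : Even q
          · have hq1 : ¬ Even (q + 1) := by simp [Nat.even_add_one, hq]
            rw [if_pos hq] at hb2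
            rw [hbdef, if_neg hq1] at hb2
            exact hxyne hb2
          · have hq1 : Even (q + 1) := Nat.even_add_one.mpr hq
            rw [if_neg hq] at hb2
            rw [hbdef, if_pos hq1] at hb2
            exact hxyne hb2.symm
        · -- the two alternating words of length p < m coincide : contradiction
          rw [hlenP₀] at hP
          have heqalt : π (alternatingWord y x p) = π (alternatingWord x y p) := by
            rw [← hP]; exact hπP₀
          have hpow := pow_eq_one_of_prod_alt_eq cs y x p heqalt
          have hpow' : (s x * s y) ^ p = 1 := by
            rw [sj_si_eq_inv cs x y, inv_pow, inv_eq_one] at hpow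
            exact hpow
          have hdvd : m ∣ p := horder ▸ orderOf_dvd_of_pow_eq_one hpow'
          have := Nat.le_of_dvd hP₀pos hdvd
          omega
  obtain ⟨x, y, V, hxy, hπ, hred⟩ := main m le_rfl
  rcases hxy with ⟨rfl, rfl⟩ | ⟨rfl, rfl⟩
  · exact ⟨V, hπ, hred⟩
  · have hpow : (s x * s y) ^ m = 1 := by
      rw [sj_si_eq_inv cs y x, inv_pow, inv_eq_one]
      exact pow_orderOf_eq_one (s y * s x)
    have hflip : π (alternatingWord x y m) = π (alternatingWord y x m) :=
      prod_alt_eq_of_pow_eq_one cs x y m hpow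
    have hπ' : π (alternatingWord y x m ++ V) = w := by
      rw [cs.wordProd_append, ← hflip, ← cs.wordProd_append]
      exact hπ
    have hπ'' := hπ'
    refine ⟨V, hπ', ?_⟩
    unfold CoxeterSystem.IsReduced at hred ⊢
    rw [hπ'']
    rw [hπ] at hred
    rw [hred, List.length_append, List.length_append, length_alternatingWord,
      length_alternatingWord]


end Aux

/-- Elementary moves on words in the simple reflections: a nil-move deletes two
consecutive identical letters, and a braid move replaces a consecutive alternating
subword `s_i s_j s_i …` of length `m_{ij} = orderOf (s_i * s_j)` by the alternating
subword `s_j s_i s_j …` of the same length. -/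
inductive ElemMove (cs : CoxeterSystem M W) : List B → List B → Prop
  | nil_move (l₁ l₂ : List B) (i : B) : ElemMove cs (l₁ ++ i :: i :: l₂) (l₁ ++ l₂)
  | braid_move (l₁ l₂ : List B) (i j : B) :
      ElemMove cs
        (l₁ ++ CoxeterSystem.alternatingWord i j (orderOf (cs.simple i * cs.simple j))
          ++ l₂)
        (l₁ ++ CoxeterSystem.alternatingWord j i (orderOf (cs.simple i * cs.simple j))
          ++ l₂)

section Moves

open CoxeterSystem List

variable (cs : CoxeterSystem M W)

local prefix:100 "s" => cs.simple
local prefix:100 "π" => cs.wordProd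
local prefix:100 "ℓ" => cs.length

private lemma alt_one (x y : B) : alternatingWord x y 1 = [y] := rfl

private lemma elemMove_wordProd {Q R : List B} (h : ElemMove cs Q R) : π Q = π R := by
  cases h with
  | nil_move l₁ l₂ a =>
    rw [cs.wordProd_append, cs.wordProd_append, cs.wordProd_cons, cs.wordProd_cons,
      cs.simple_mul_simple_cancel_left]
  | braid_move l₁ l₂ a b =>
    rw [cs.wordProd_append, cs.wordProd_append, cs.wordProd_append, cs.wordProd_append,
      prod_alt_eq_of_pow_eq_one cs a b _ (pow_orderOf_eq_one (s a * s b))]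

private lemma elemMove_cons (a : B) {Q R : List B} (h : ElemMove cs Q R) :
    ElemMove cs (a :: Q) (a :: R) := by
  cases h with
  | nil_move l₁ l₂ i =>
    have := ElemMove.nil_move (cs := cs) (a :: l₁) l₂ i
    simpa [List.cons_append] using this
  | braid_move l₁ l₂ i j =>
    have := ElemMove.braid_move (cs := cs) (a :: l₁) l₂ i j
    simpa [List.cons_append] using this

private lemma rtg_cons (a : B) {Q R : List B}
    (h : Relation.ReflTransGen (ElemMove cs) Q R) :
    Relation.ReflTransGen (ElemMove cs) (a :: Q) (a :: R) := by
  induction h with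
  | refl => exact Relation.ReflTransGen.refl
  | tail _ h2 ih => exact ih.tail (elemMove_cons cs a h2)

/-- Any two reduced words for the same element are connected by elementary moves. -/
private lemma connect [Finite W] : ∀ (n : ℕ) (w : W) (Q Q' : List B), π Q = w → π Q' = w →
    cs.IsReduced Q → cs.IsReduced Q' → Q.length = n →
    Relation.ReflTransGen (ElemMove cs) Q Q' := by
  intro n
  induction n using Nat.strong_induction_on with
  | _ n ih =>
  intro w Q Q' hQ hQ' hredQ hredQ' hlen
  have hℓw : ℓ w = n := by
    unfold CoxeterSystem.IsReduced at hredQ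
    rw [hQ] at hredQ
    rw [hredQ, hlen]
  have hlen' : Q'.length = n := by
    unfold CoxeterSystem.IsReduced at hredQ'
    rw [hQ'] at hredQ'
    rw [← hredQ', hℓw]
  cases n with
  | zero =>
    rw [List.length_eq_zero_iff.mp hlen, List.length_eq_zero_iff.mp hlen']
  | succ n =>
  obtain ⟨a, T, rfl⟩ := List.exists_cons_of_ne_nil
    (by intro h; rw [h] at hlen; simp at hlen : Q ≠ [])
  obtain ⟨a', T', rfl⟩ := List.exists_cons_of_ne_nil
    (by intro h; rw [h] at hlen'; simp at hlen' : Q' ≠ [])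
  -- gluing two reduced words with the same first letter
  have glue : ∀ (d : B) (X Y : List B), π (d :: X) = w → π (d :: Y) = w →
      cs.IsReduced (d :: X) → cs.IsReduced (d :: Y) →
      Relation.ReflTransGen (ElemMove cs) (d :: X) (d :: Y) := by
    intro d X Y h1 h2 hr1 hr2
    have hX : π X = s d * w := by
      rw [← h1, cs.wordProd_cons, cs.simple_mul_simple_cancel_left]
    have hY : π Y = s d * w := by
      rw [← h2, cs.wordProd_cons, cs.simple_mul_simple_cancel_left]
    have hXlen : X.length = n := by
      unfold CoxeterSystem.IsReduced at hr1
      rw [h1, List.length_cons] at hr1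
      omega
    have hYlen : Y.length = n := by
      unfold CoxeterSystem.IsReduced at hr2
      rw [h2, List.length_cons] at hr2
      omega
    have hℓsd : ℓ (s d * w) = n := by
      have hle : ℓ (s d * w) ≤ n := by rw [← hX, ← hXlen]; exact cs.length_wordProd_le X
      rcases cs.length_simple_mul w d with h | h <;> omega
    have hrX : cs.IsReduced X := by
      unfold CoxeterSystem.IsReduced
      rw [hX, hℓsd, hXlen]
    have hrY : cs.IsReduced Y := by
      unfold CoxeterSystem.IsReduced
      rw [hY, hℓsd, hYlen]
    exact rtg_cons cs d (ih n (by omega) (s d * w) X Y hX hY hrX hrY hXlen)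
  by_cases haa : a = a'
  · subst haa
    exact glue a T T' hQ hQ' hredQ hredQ'
  · have hda : cs.IsLeftDescent w a := by
      unfold CoxeterSystem.IsLeftDescent
      have h1 : s a * w = π T := by
        rw [← hQ, cs.wordProd_cons, cs.simple_mul_simple_cancel_left]
      have h2 : ℓ (π T) ≤ T.length := cs.length_wordProd_le T
      rw [h1]
      simp only [List.length_cons] at hlen
      omega
    have hda' : cs.IsLeftDescent w a' := by
      unfold CoxeterSystem.IsLeftDescent
      have h1 : s a' * w = π T' := by
        rw [← hQ', cs.wordProd_cons, cs.simple_mul_simple_cancel_left]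
      have h2 : ℓ (π T') ≤ T'.length := cs.length_wordProd_le T'
      rw [h1]
      simp only [List.length_cons] at hlen'
      omega
    by_cases hss : s a = s a'
    · -- single braid move of length 1
      have h1 : orderOf (s a' * s a) = 1 := by
        rw [← hss, cs.simple_mul_simple_self, orderOf_one]
      have hmove : ElemMove cs (a :: T) (a' :: T) := by
        have := ElemMove.braid_move (cs := cs) [] T a' a
        rw [h1] at this
        simpa [alt_one] using this
      have hπ2 : π (a' :: T) = w := by
        rw [cs.wordProd_cons, ← hss, ← cs.wordProd_cons, hQ]
      have hred2 : cs.IsReduced (a' :: T) := by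
        unfold CoxeterSystem.IsReduced at hredQ ⊢
        rw [hπ2, ← hQ]
        simpa using hredQ
      exact (Relation.ReflTransGen.single hmove).trans
        (glue a' T T' hπ2 hQ' hred2 hredQ')
    · -- full braid move
      set m := orderOf (s a * s a') with hmdef
      have hm : 0 < m := by
        rw [hmdef]
        exact orderOf_pos _
      obtain ⟨V, hPπ, hPred⟩ := prefix_alternating cs hss hda hda' hm
      set P := alternatingWord a a' m ++ V with hPdef
      set P' := alternatingWord a' a m ++ V with hP'def
      have hmove : ElemMove cs P P' := by
        have := ElemMove.braid_move (cs := cs) [] V a a'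
        simpa using this
      have hmove' : ElemMove cs P' P := by
        have horder' : orderOf (s a' * s a) = m := by
          rw [sj_si_eq_inv cs a a', orderOf_inv]
        have := ElemMove.braid_move (cs := cs) [] V a' a
        rw [horder'] at this
        simpa using this
      have hP'π : π P' = w := by
        rw [← elemMove_wordProd cs hmove, hPπ]
      have hP'red : cs.IsReduced P' := by
        unfold CoxeterSystem.IsReduced at hPred ⊢
        rw [hP'π, ← hPπ, hPred, hPdef, hP'def, List.length_append, List.length_append,
          length_alternatingWord, length_alternatingWord]
      obtain ⟨q, hq⟩ : ∃ q, m = q + 1 := ⟨m - 1, by omega⟩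
      have hexp : alternatingWord a a' m
          = (if Even q then a' else a) :: alternatingWord a a' q := by
        rw [hq, alternatingWord_succ']
      have hexp' : alternatingWord a' a m
          = (if Even q then a else a') :: alternatingWord a' a q := by
        rw [hq, alternatingWord_succ']
      by_cases hqe : Even q
      · -- P starts with a', P' starts with a
        have hPform : P = a' :: (alternatingWord a a' q ++ V) := by
          rw [hPdef, hexp, if_pos hqe, List.cons_append]
        have hP'form : P' = a :: (alternatingWord a' a q ++ V) := by
          rw [hP'def, hexp', if_pos hqe, List.cons_append]
        have step1 : Relation.ReflTransGen (ElemMove cs) (a :: T)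
            (a :: (alternatingWord a' a q ++ V)) := by
          rw [← hP'form]
          rw [hP'form]
          exact glue a T _ hQ (by rw [← hP'form]; exact hP'π)
            hredQ (by rw [← hP'form]; exact hP'red)
        have step3 : Relation.ReflTransGen (ElemMove cs) P (a' :: T') := by
          rw [hPform]
          exact glue a' _ T' (by rw [← hPform]; exact hPπ) hQ'
            (by rw [← hPform]; exact hPred) hredQ'
        have step2 : Relation.ReflTransGen (ElemMove cs) (a :: (alternatingWord a' a q ++ V)) P := by
          rw [← hP'form]
          exact Relation.ReflTransGen.single hmove'
        exact (step1.trans step2).trans step3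
      · -- P starts with a, P' starts with a'
        have hPform : P = a :: (alternatingWord a a' q ++ V) := by
          rw [hPdef, hexp, if_neg hqe, List.cons_append]
        have hP'form : P' = a' :: (alternatingWord a' a q ++ V) := by
          rw [hP'def, hexp', if_neg hqe, List.cons_append]
        have step1 : Relation.ReflTransGen (ElemMove cs) (a :: T)
            (a :: (alternatingWord a a' q ++ V)) := by
          exact glue a T _ hQ (by rw [← hPform]; exact hPπ)
            hredQ (by rw [← hPform]; exact hPred)
        have step2 : Relation.ReflTransGen (ElemMove cs) (a :: (alternatingWord a a' q ++ V)) P' := by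
          rw [← hPform]
          exact Relation.ReflTransGen.single hmove
        have step3 : Relation.ReflTransGen (ElemMove cs) P' (a' :: T') := by
          rw [hP'form]
          exact glue a' _ T' (by rw [← hP'form]; exact hP'π) hQ'
            (by rw [← hP'form]; exact hP'red) hredQ'
        exact (step1.trans step2).trans step3

/-- **Word Property.** -/
private theorem word_property_aux [Finite W] (cs : CoxeterSystem M W) (w : W) (Q : List B)
    (hQ : cs.wordProd Q = w) :
    ∃ R : List B, Relation.ReflTransGen (ElemMove cs) Q R ∧
      R.length = cs.length w ∧ cs.wordProd R = w := by
  suffices main : ∀ (n : ℕ) (Q : List B) (w : W), Q.length = n → cs.wordProd Q = w →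
      ∃ R : List B, Relation.ReflTransGen (ElemMove cs) Q R ∧
        R.length = cs.length w ∧ cs.wordProd R = w by
    exact main Q.length Q w rfl hQ
  clear hQ Q w
  intro n
  induction n using Nat.strong_induction_on with
  | _ n ih =>
  intro Q w hlen hQ
  cases Q with
  | nil =>
    refine ⟨[], Relation.ReflTransGen.refl, ?_, hQ⟩
    rw [← hQ, cs.wordProd_nil]
    simp
  | cons a T =>
    set u := cs.wordProd T with hu
    obtain ⟨T₁, hT₁rtg, hT₁len, hT₁π⟩ := ih (n - 1)
      (by simp at hlen; omega) T u (by simp at hlen; omega) rfl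
    have hw : w = cs.simple a * u := by rw [← hQ, cs.wordProd_cons, hu]
    rcases cs.length_simple_mul u a with hup | hdown
    · -- a :: T₁ is already reduced
      refine ⟨a :: T₁, rtg_cons cs a hT₁rtg, ?_, ?_⟩
      · rw [List.length_cons, hT₁len, hw, hup]
      · rw [cs.wordProd_cons, hT₁π, hw]
    · -- shorten by a nil move
      obtain ⟨τ, hτred, hτπ⟩ := cs.exists_reduced_word' (cs.simple a * u)
      have hπaτ : cs.wordProd (a :: τ) = u := by
        rw [cs.wordProd_cons, ← hτπ, cs.simple_mul_simple_cancel_left]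
      have hτlen : τ.length = cs.length (cs.simple a * u) := by
        unfold CoxeterSystem.IsReduced at hτred
        rw [← hτπ] at hτred
        omega
      have hredaτ : cs.IsReduced (a :: τ) := by
        unfold CoxeterSystem.IsReduced
        rw [hπaτ, List.length_cons]
        omega
      have hredT₁ : cs.IsReduced T₁ := by
        unfold CoxeterSystem.IsReduced
        rw [hT₁π, hT₁len]
      have hconn : Relation.ReflTransGen (ElemMove cs) T₁ (a :: τ) :=
        connect cs T₁.length u T₁ (a :: τ) hT₁π hπaτ hredT₁ hredaτ rfl
      have hnil : ElemMove cs (a :: a :: τ) τ := by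
        have := ElemMove.nil_move (cs := cs) [] τ a
        simpa using this
      refine ⟨τ, ?_, ?_, ?_⟩
      · exact ((rtg_cons cs a hT₁rtg).trans (rtg_cons cs a hconn)).tail hnil
      · rw [hτlen, hw]
      · rw [← hτπ, hw]


end Moves

/-- **Word Property.**  Any word expressing `w` can be transformed into a reduced word
for `w` by a finite sequence of nil-moves and braid moves. -/
theorem word_property [Finite W] (cs : CoxeterSystem M W) (w : W) (Q : List B)
    (hQ : cs.wordProd Q = w) :
    ∃ R : List B, Relation.ReflTransGen (ElemMove cs) Q R ∧
      R.length = cs.length w ∧ cs.wordProd R = w := by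
  obtain ⟨R, h1, h2, h3⟩ := word_property_aux cs w Q hQ
  exact ⟨R, h1, h2, h3⟩

end SubwordComplexNil
end
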